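/- arXiv:2204.06284 — 5 statements merged into one kernel-verified Lean document; each statement's English description precedes it below -/
import Mathlib

section
/- Let ℓ ≥ 2 be an integer, let G be a graph in 𝒢_ℓ, and let e be an edge of G that is not contained in any cycle of length 2ℓ+1. Then the graph G − e obtained by deleting the edge e also belongs to 𝒢_ℓ. -/
open SimpleGraph

/-- A *hole* of length `n` in `G`: an induced cycle of length `n ≥ 4`. -/
def SimpleGraph.HasHole {V : Type*} (G : SimpleGraph V) (n : ℕ) : Prop :=
  4 ≤ n ∧ ∃ (v : V) (w : G.Walk v v), w.IsCycle ∧ w.toSubgraph.IsInduced ∧ w.length = n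

/-- `G ∈ 𝒢_ℓ`: `G` has girth `2ℓ+1` and no odd hole of length at least `2ℓ+3`. -/
def SimpleGraph.MemGFamily {V : Type*} (G : SimpleGraph V) (l : ℕ) : Prop :=
  G.egirth = (2 * l + 1 : ℕ) ∧ ∀ n : ℕ, Odd n → 2 * l + 3 ≤ n → ¬ G.HasHole n

/-- A walk's subgraph is induced iff every graph edge between support vertices is a walk edge. -/
lemma aux_induced_iff {V : Type*} {H : SimpleGraph V} {a b : V} (w : H.Walk a b) :
    w.toSubgraph.IsInduced ↔
      ∀ x y, x ∈ w.support → y ∈ w.support → H.Adj x y → s(x, y) ∈ w.edges := by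
  constructor
  · intro h x y hx hy hxy
    have h2 := h ((w.mem_verts_toSubgraph).2 hx) ((w.mem_verts_toSubgraph).2 hy) hxy
    rwa [← Subgraph.mem_edgeSet, w.mem_edges_toSubgraph] at h2
  · intro h x hx y hy hxy
    rw [w.mem_verts_toSubgraph] at hx hy
    rw [← Subgraph.mem_edgeSet, w.mem_edges_toSubgraph]
    exact h x y hx hy hxy

/-- Splitting a cycle at a vertex distinct from its basepoint yields two internally
disjoint paths. -/
lemma aux_split {V : Type*} [DecidableEq V] {H : SimpleGraph V} {u v : V} {c : H.Walk u u}
    (hc : c.IsCycle) (hv : v ∈ c.support) (hne : u ≠ v) :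
    (c.takeUntil v hv).IsPath ∧ (c.dropUntil v hv).IsPath ∧
      ∀ x, x ∈ (c.takeUntil v hv).support → x ∈ (c.dropUntil v hv).support →
        x = u ∨ x = v := by
  set p := c.takeUntil v hv with hp
  set q := c.dropUntil v hv with hq
  have hspec : p.append q = c := c.take_spec hv
  have htail : c.support.tail = p.support.tail ++ q.support.tail := by
    conv_lhs => rw [← hspec]
    rw [Walk.tail_support_append]
  have hnd : (p.support.tail ++ q.support.tail).Nodup := htail ▸ hc.support_nodup
  rw [List.nodup_append] at hnd
  obtain ⟨hnp, hnq, hdisj⟩ := hnd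
  have hvp : v ∈ p.support.tail := by
    have h1 := p.end_mem_support
    rw [Walk.support_eq_cons p] at h1
    rcases List.mem_cons.1 h1 with h2 | h2
    · exact absurd h2.symm hne
    · exact h2
  have huq : u ∈ q.support.tail := by
    have h1 := q.end_mem_support
    rw [Walk.support_eq_cons q] at h1
    rcases List.mem_cons.1 h1 with h2 | h2
    · exact absurd h2 hne
    · exact h2
  refine ⟨?_, ?_, ?_⟩
  · rw [Walk.isPath_def, Walk.support_eq_cons p, List.nodup_cons]
    exact ⟨fun h => hdisj _ h _ huq rfl, hnp⟩
  · rw [Walk.isPath_def, Walk.support_eq_cons q, List.nodup_cons]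
    exact ⟨fun h => hdisj _ hvp _ h rfl, hnq⟩
  · intro x hxp hxq
    by_contra hcon
    push_neg at hcon
    obtain ⟨hxu, hxv⟩ := hcon
    have hx1 : x ∈ p.support.tail := by
      rw [Walk.support_eq_cons p] at hxp
      rcases List.mem_cons.1 hxp with h2 | h2
      · exact absurd h2 hxu
      · exact h2
    have hx2 : x ∈ q.support.tail := by
      rw [Walk.support_eq_cons q] at hxq
      rcases List.mem_cons.1 hxq with h2 | h2
      · exact absurd h2 hxv
      · exact h2
    exact hdisj _ hx1 _ hx2 rfl

/-- Closing up a path with an extra edge gives an induced cycle, under suitable hypotheses. -/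
lemma aux_cycle {V : Type*} {G : SimpleGraph V} {u v : V} (h : G.Adj u v)
    {p : G.Walk u v} {q : G.Walk v u}
    (hp : p.IsPath) (hep : s(u, v) ∉ p.edges)
    (hdisj : ∀ x, x ∈ p.support → x ∈ q.support → x = u ∨ x = v)
    (hind : ∀ x y, x ∈ p.support → y ∈ p.support → G.Adj x y →
        s(x, y) = s(u, v) ∨ s(x, y) ∈ p.edges ∨ s(x, y) ∈ q.edges) :
    ∃ (w : G.Walk v v), w.IsCycle ∧ w.toSubgraph.IsInduced ∧
      w.length = p.length + 1 ∧ s(u, v) ∈ w.edges := by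
  refine ⟨Walk.cons h.symm p, ?_, ?_, ?_, ?_⟩
  · rw [Walk.cons_isCycle_iff]
    refine ⟨hp, ?_⟩
    rwa [Sym2.eq_swap]
  · rw [aux_induced_iff]
    intro x y hx hy hxy
    rw [Walk.support_cons, List.mem_cons] at hx hy
    have hx' : x ∈ p.support := by
      rcases hx with h' | h'
      · subst h'; exact p.end_mem_support
      · exact h'
    have hy' : y ∈ p.support := by
      rcases hy with h' | h'
      · subst h'; exact p.end_mem_support
      · exact h'
    rw [Walk.edges_cons, List.mem_cons]
    rcases hind x y hx' hy' hxy with h1 | h1 | h1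
    · left; rw [h1]; exact Sym2.eq_swap
    · right; exact h1
    · have hxq : x ∈ q.support := q.fst_mem_support_of_mem_edges h1
      have hyq : y ∈ q.support := q.snd_mem_support_of_mem_edges h1
      have hne := hxy.ne
      left
      rcases hdisj x hx' hxq with rfl | rfl <;> rcases hdisj y hy' hyq with rfl | rfl
      · exact absurd rfl hne
      · exact Sym2.eq_swap
      · rfl
      · exact absurd rfl hne
  · simp
  · rw [Walk.edges_cons]
    exact List.mem_cons.2 (Or.inl Sym2.eq_swap.symm)

/-- if `G ∈ 𝒢_ℓ` (`ℓ ≥ 2`) and the edge `e` of `G` lies on no cycle of length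
`2ℓ+1`, then `G - e ∈ 𝒢_ℓ`. -/
theorem stmt_0 {V : Type*} [Fintype V] (l : ℕ) (hl : 2 ≤ l) (G : SimpleGraph V)
    (hG : G.MemGFamily l) (e : Sym2 V) (he : e ∈ G.edgeSet)
    (hnc : ¬ ∃ (v : V) (w : G.Walk v v), w.IsCycle ∧ w.length = 2 * l + 1 ∧ e ∈ w.edges) :
    (G.deleteEdges {e}).MemGFamily l := by
  classical
  induction e using Sym2.ind with
  | _ u v =>
  rw [SimpleGraph.mem_edgeSet] at he
  obtain ⟨hG1, hG2⟩ := hG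
  set G' := G.deleteEdges {s(u, v)} with hG'def
  have hle : G' ≤ G := deleteEdges_le _
  have hG'edge : G'.edgeSet = G.edgeSet \ {s(u, v)} := edgeSet_deleteEdges _
  have hG'sub : G'.edgeSet ⊆ G.edgeSet := by rw [hG'edge]; exact Set.diff_subset
  have heG' : s(u, v) ∉ G'.edgeSet := by rw [hG'edge]; simp
  -- every cycle in G has length at least 2l+1
  have hgirth : ∀ (a : V) (w : G.Walk a a), w.IsCycle → 2 * l + 1 ≤ w.length := by
    intro a w hw
    have h1 : ((2 * l + 1 : ℕ) : ℕ∞) ≤ (w.length : ℕ∞) := le_egirth.1 hG1.ge a w hw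
    exact_mod_cast h1
  -- Part 1 : the girth of G' is 2l+1
  have hac : ¬ G.IsAcyclic := by
    rw [← egirth_eq_top, hG1]
    exact_mod_cast ENat.coe_ne_top (2 * l + 1)
  obtain ⟨a0, w0, hw0, hlen0⟩ := exists_egirth_eq_length.2 hac
  have hw0len : w0.length = 2 * l + 1 := by
    rw [hG1] at hlen0
    exact_mod_cast hlen0.symm
  have hew0 : s(u, v) ∉ w0.edges := fun hmem' => hnc ⟨a0, w0, hw0, hw0len, hmem'⟩
  have hsub0 : ∀ f ∈ w0.edges, f ∈ G'.edgeSet := by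
    intro f hf
    rw [hG'edge]
    exact ⟨w0.edges_subset_edgeSet hf, fun hf' => hew0 (Set.mem_singleton_iff.1 hf' ▸ hf)⟩
  have hup : G'.egirth ≤ ((2 * l + 1 : ℕ) : ℕ∞) := by
    have h1 : G'.egirth ≤ ((w0.transfer G' hsub0).length : ℕ∞) := by
      rw [egirth]
      exact iInf₂_le_of_le a0 (w0.transfer G' hsub0)
        (iInf_le _ (hw0.transfer hsub0))
    rwa [Walk.length_transfer, hw0len] at h1
  have hlow : ((2 * l + 1 : ℕ) : ℕ∞) ≤ G'.egirth := hG1 ▸ egirth_anti hle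
  refine ⟨le_antisymm hup hlow, ?_⟩
  -- Part 2 : no odd holes of length ≥ 2l+3
  intro n hodd hn hh
  obtain ⟨h4, a, w, hw, hind, hlen⟩ := hh
  have hindE : ∀ x y, x ∈ w.support → y ∈ w.support → G'.Adj x y → s(x, y) ∈ w.edges :=
    (aux_induced_iff w).1 hind
  have hew : s(u, v) ∉ w.edges := fun h' => heG' (w.edges_subset_edgeSet h')
  -- the final contradiction maker: an odd induced cycle in G through s(u,v)
  have final : ∀ (m : ℕ) (x : V) (W : G.Walk x x), W.IsCycle → W.toSubgraph.IsInduced →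
      W.length = m → s(u, v) ∈ W.edges → Odd m → False := by
    intro m x W hWc hWind hWlen heW hmodd
    have h1 : 2 * l + 1 ≤ m := hWlen ▸ hgirth x W hWc
    have h2 : m ≠ 2 * l + 1 := by
      intro hm
      exact hnc ⟨x, W, hWc, by omega, heW⟩
    obtain ⟨k, hk⟩ := hmodd
    have h3 : 2 * l + 3 ≤ m := by omega
    exact hG2 m ⟨k, hk⟩ h3 ⟨by omega, x, W, hWc, hWind, hWlen⟩
  by_cases hcase : u ∈ w.support ∧ v ∈ w.support
  · obtain ⟨hu, hv⟩ := hcase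
    set c := w.rotate u hu with hcdef
    have hcc : c.IsCycle := hw.rotate hu
    have hrot : c.support.tail ~r w.support.tail := by
      rw [hcdef]; exact Walk.support_rotate w u hu
    have hrote : c.edges ~r w.edges := by
      rw [hcdef]; exact Walk.rotate_edges w u hu
    -- supports of c and w coincide
    have hatail : a ∈ w.support.tail := by
      rw [← Walk.support_tail_of_not_nil w hw.not_nil]
      exact Walk.end_mem_support _
    have hutail : u ∈ c.support.tail := by
      rw [← Walk.support_tail_of_not_nil c hcc.not_nil]
      exact Walk.end_mem_support _
    have hsupp : ∀ x, x ∈ c.support ↔ x ∈ w.support := by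
      intro x
      rw [Walk.support_eq_cons c, Walk.support_eq_cons w, List.mem_cons, List.mem_cons]
      rw [hrot.perm.mem_iff]
      constructor
      · rintro (rfl | h)
        · right
          rwa [← hrot.perm.mem_iff]
        · right; exact h
      · rintro (rfl | h)
        · right; exact hatail
        · right; exact h
    have hvc : v ∈ c.support := (hsupp v).2 hv
    have hec : s(u, v) ∉ c.edges := fun h' => hew (hrote.perm.mem_iff.1 h')
    obtain ⟨hpp, hqp, hdisj⟩ := aux_split hcc hvc he.ne
    set p := c.takeUntil v hvc with hpdef
    set q := c.dropUntil v hvc with hqdef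
    have hspec : p.append q = c := c.take_spec hvc
    have hclen : c.length = n := by
      have h1 : c.length = w.length := by
        rw [hcdef, Walk.rotate, Walk.length_append, add_comm, ← Walk.length_append,
          Walk.take_spec]
      rw [h1, hlen]
    have hlenpq : p.length + q.length = n := by
      have h1 := congrArg Walk.length hspec
      rw [Walk.length_append] at h1
      omega
    have hedgesc : p.edges ++ q.edges = c.edges := by
      rw [← Walk.edges_append, hspec]
    have hep : s(u, v) ∉ p.edges := fun h' => hec (c.edges_takeUntil_subset hvc h')
    have heq2 : s(u, v) ∉ q.edges := fun h' => hec (c.edges_dropUntil_subset hvc h')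
    have hpG : ∀ f ∈ p.edges, f ∈ G.edgeSet := fun f hf => hG'sub (p.edges_subset_edgeSet hf)
    have hqG : ∀ f ∈ q.edges, f ∈ G.edgeSet := fun f hf => hG'sub (q.edges_subset_edgeSet hf)
    -- the key induced-ness statement along c
    have key : ∀ x y, x ∈ c.support → y ∈ c.support → G.Adj x y →
        s(x, y) = s(u, v) ∨ s(x, y) ∈ p.edges ∨ s(x, y) ∈ q.edges := by
      intro x y hx hy hxy
      by_cases hxyuv : s(x, y) = s(u, v)
      · exact Or.inl hxyuv
      · right
        have hadj' : G'.Adj x y := by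
          rw [hG'def, deleteEdges_adj]
          exact ⟨hxy, by simpa using hxyuv⟩
        have h1 := hindE x y ((hsupp x).1 hx) ((hsupp y).1 hy) hadj'
        have h2 : s(x, y) ∈ c.edges := hrote.perm.mem_iff.2 h1
        rw [← hedgesc, List.mem_append] at h2
        exact h2
    set P := p.transfer G hpG with hPdef
    set Q := q.transfer G hqG with hQdef
    have hPsup : P.support = p.support := Walk.support_transfer _ _
    have hQsup : Q.support = q.support := Walk.support_transfer _ _
    have hPed : P.edges = p.edges := Walk.edges_transfer _ _
    have hQed : Q.edges = q.edges := Walk.edges_transfer _ _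
    -- first cycle : through p
    obtain ⟨W1, hW1c, hW1i, hW1l, hW1e⟩ :=
      aux_cycle he (p := P) (q := Q) (hpp.transfer hpG)
        (by rwa [hPed])
        (by
          intro x hx hy
          rw [hPsup] at hx
          rw [hQsup] at hy
          exact hdisj x hx hy)
        (by
          intro x y hx hy hxy
          rw [hPsup] at hx hy
          rw [hPed, hQed]
          exact key x y (c.support_takeUntil_subset hvc hx)
            (c.support_takeUntil_subset hvc hy) hxy)
    -- second cycle : through q
    obtain ⟨W2, hW2c, hW2i, hW2l, hW2e⟩ :=
      aux_cycle he.symm (p := Q) (q := P) (hqp.transfer hqG)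
        (by rw [hQed, Sym2.eq_swap]; exact heq2)
        (by
          intro x hx hy
          rw [hQsup] at hx
          rw [hPsup] at hy
          exact (hdisj x hy hx).symm)
        (by
          intro x y hx hy hxy
          rw [hQsup] at hx hy
          rw [hPed, hQed]
          rcases key x y (c.support_dropUntil_subset hvc hx)
            (c.support_dropUntil_subset hvc hy) hxy with h1 | h1 | h1
          · left; rw [h1]; exact Sym2.eq_swap
          · right; right; exact h1
          · right; left; exact h1)
    have hPlen : P.length = p.length := Walk.length_transfer _ _
    have hQlen : Q.length = q.length := Walk.length_transfer _ _
    rw [hPlen] at hW1l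
    rw [hQlen] at hW2l
    rcases Nat.even_or_odd p.length with hpe | hpo
    · obtain ⟨j, hj⟩ := hpe
      exact final (p.length + 1) v W1 hW1c hW1i hW1l hW1e ⟨j, by omega⟩
    · obtain ⟨j, hj⟩ := hpo
      obtain ⟨k, hk⟩ := hodd
      exact final (q.length + 1) u W2 hW2c hW2i hW2l
        (by rwa [Sym2.eq_swap] at hW2e) ⟨k - j, by omega⟩
  · -- e is not a chord : w is induced in G itself
    have hGsub : ∀ f ∈ w.edges, f ∈ G.edgeSet := fun f hf => hG'sub (w.edges_subset_edgeSet hf)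
    have hWind : (w.transfer G hGsub).toSubgraph.IsInduced := by
      rw [aux_induced_iff]
      intro x y hx hy hxy
      rw [Walk.support_transfer] at hx hy
      rw [Walk.edges_transfer]
      by_cases hxyuv : s(x, y) = s(u, v)
      · exfalso
        rw [Sym2.eq_iff] at hxyuv
        rcases hxyuv with ⟨rfl, rfl⟩ | ⟨rfl, rfl⟩
        · exact hcase ⟨hx, hy⟩
        · exact hcase ⟨hy, hx⟩
      · exact hindE x y hx hy (by rw [hG'def, deleteEdges_adj]; exact ⟨hxy, by simpa using hxyuv⟩)
    exact hG2 n hodd hn ⟨h4, a, w.transfer G hGsub, hw.transfer hGsub, hWind,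
      by rw [Walk.length_transfer, hlen]⟩
end

section
/- Let G be a graph in 𝒢₀. Then every edge of G is contained in some cycle of length 5. -/
open SimpleGraph

/-- `G ∈ 𝒢₀`: `G ∈ 𝒢₂`, `χ(G) = 4`, and every proper subgraph of `G` is 3-colorable. -/
def SimpleGraph.MemG0 {V : Type*} (G : SimpleGraph V) : Prop :=
  G.MemGFamily 2 ∧ G.chromaticNumber = 4 ∧
    ∀ H : G.Subgraph, H ≠ ⊤ → H.coe.Colorable 3

/-- Every vertex on a walk in a graph whose edges avoid color `k` has color `≠ k`. -/
private lemma walk_support_ne {V : Type*} {H : SimpleGraph V} {c : V → Fin 3} {k : Fin 3}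
    (hH : ∀ a b, H.Adj a b → c a ≠ k ∧ c b ≠ k) :
    ∀ {a b : V} (w : H.Walk a b), c a ≠ k → ∀ z ∈ w.support, c z ≠ k := by
  intro a b w
  induction w with
  | nil => intro ha z hz; simp only [Walk.support_nil, List.mem_singleton] at hz; subst hz; exact ha
  | @cons a m b h p ih =>
    intro ha z hz
    rw [Walk.support_cons, List.mem_cons] at hz
    rcases hz with rfl | hz
    · exact ha
    · exact ih (hH a m h).2 z hz

/-- Colors alternate along a walk using only two colors. -/
private lemma walk_parity {V : Type*} {H : SimpleGraph V} {c : V → Fin 3} {k : Fin 3}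
    (hH : ∀ a b, H.Adj a b → c a ≠ c b ∧ c a ≠ k ∧ c b ≠ k) :
    ∀ {a b : V} (w : H.Walk a b), c b ≠ k → (c a = c b ↔ Even w.length) := by
  intro a b w
  induction w with
  | nil => intro _; simp
  | @cons a m b h p ih =>
    intro hb
    obtain ⟨ham, hak, hmk⟩ := hH a m h
    have key : ∀ (k x y z : Fin 3), x ≠ k → y ≠ k → z ≠ k → x ≠ y → (x = z ↔ ¬ y = z) := by
      decide
    have := ih hb
    rw [Walk.length_cons, Nat.even_add_one, ← this]
    exact key k (c a) (c m) (c b) hak hmk hb ham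

/-- A walk of length one is a single edge. -/
private lemma walk_length_one_edges {V : Type*} {H : SimpleGraph V} {u v : V}
    (w : H.Walk u v) (h : w.length = 1) : w.edges = [s(u, v)] := by
  cases w with
  | nil => simp at h
  | @cons _ m _ ha w' =>
    rw [Walk.length_cons, Nat.add_eq_right] at h
    have hmv : m = v := Walk.eq_of_length_eq_zero h
    subst hmv
    have : w' = Walk.nil := Walk.nil_iff_eq_nil.mp (Walk.length_eq_zero_iff.mp h)
    subst this
    simp

/-- Any chord between vertices of a minimum-length walk is an edge of the walk. -/
private lemma chord_mem_edges {V : Type*} [DecidableEq V] {H : SimpleGraph V} :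
    ∀ {x y : V} (P : H.Walk x y), (∀ Q : H.Walk x y, P.length ≤ Q.length) →
      ∀ u v, H.Adj u v → u ∈ P.support → v ∈ P.support → s(u, v) ∈ P.edges := by
  intro x y P
  induction P with
  | nil =>
    intro _ u v huv hu hv
    simp only [Walk.support_nil, List.mem_singleton] at hu hv
    subst hu; subst hv
    exact absurd huv (H.loopless.irrefl _)
  | @cons a m b h P ih =>
    intro hmin u v huv hu hv
    have hmin' : ∀ Q : H.Walk m b, P.length ≤ Q.length := by
      intro Q
      have := hmin (Walk.cons h Q)
      rw [Walk.length_cons, Walk.length_cons] at this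
      omega
    -- key: a chord from the first vertex
    have key : ∀ u v, H.Adj u v → u = a → v ∈ (Walk.cons h P).support →
        s(u, v) ∈ (Walk.cons h P).edges := by
      intro u v huv hua hv
      subst hua
      rw [Walk.support_cons, List.mem_cons] at hv
      rcases hv with rfl | hv
      · exact absurd huv (H.loopless.irrefl _)
      · -- shortcut walk: u → v → b
        have hQ := hmin (Walk.cons huv (P.dropUntil v hv))
        rw [Walk.length_cons, Walk.length_cons] at hQ
        have hsplit : (P.takeUntil v hv).length + (P.dropUntil v hv).length = P.length := by
          have := congrArg Walk.length (P.take_spec hv)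
          rwa [Walk.length_append] at this
        have htake : (P.takeUntil v hv).length = 0 := by omega
        have hmv : m = v := Walk.eq_of_length_eq_zero htake
        subst hmv
        rw [Walk.edges_cons]
        exact List.mem_cons_self
    rw [Walk.support_cons, List.mem_cons] at hu hv
    rcases hu with rfl | hu
    · exact key u v huv rfl (by rw [Walk.support_cons, List.mem_cons]; tauto)
    · rcases hv with rfl | hv
      · have := key v u huv.symm rfl
          (by rw [Walk.support_cons, List.mem_cons]; right; exact hu)
        rw [Sym2.eq_swap]
        exact this
      · have := ih hmin' u v huv hu hv
        rw [Walk.edges_cons]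
        exact List.mem_cons_of_mem _ this

/-- in a graph `G ∈ 𝒢₀`, every edge lies on some cycle of length 5. -/
theorem stmt_3 {V : Type*} [Fintype V] (G : SimpleGraph V) (hG : G.MemG0) :
    ∀ e ∈ G.edgeSet, ∃ (v : V) (w : G.Walk v v), w.IsCycle ∧ w.length = 5 ∧ e ∈ w.edges := by
  classical
  obtain ⟨⟨hgirth, hholes⟩, hchrom, hcrit⟩ := hG
  intro e he
  induction e using Sym2.ind with
  | _ x y =>
  rw [mem_edgeSet] at he
  -- no 3-coloring of G itself
  have hnotcol : ∀ c' : V → Fin 3, ¬ (∀ a b, G.Adj a b → c' a ≠ c' b) := by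
    intro c' hp
    have hcol : G.Colorable 3 := ⟨Coloring.mk c' (fun {a b} h => hp a b h)⟩
    have h3 := hcol.chromaticNumber_le
    rw [hchrom] at h3
    exact absurd (by exact_mod_cast h3 : (4:ℕ) ≤ 3) (by omega)
  -- the graph with the edge s(x,y) deleted, as a subgraph of G
  let Gdel : G.Subgraph :=
    { verts := Set.univ
      Adj := fun a b => G.Adj a b ∧ s(a, b) ≠ s(x, y)
      adj_sub := fun h => h.1
      edge_vert := fun _ => Set.mem_univ _
      symm := by
        constructor
        intro a b hab
        refine ⟨hab.1.symm, ?_⟩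
        rw [Sym2.eq_swap]
        exact hab.2 }
  have hGdel : ∀ a b, Gdel.Adj a b ↔ (G.Adj a b ∧ s(a, b) ≠ s(x, y)) := fun a b => Iff.rfl
  have hne : Gdel ≠ ⊤ := by
    intro h
    have hadj : Gdel.Adj x y := by rw [h]; exact Subgraph.top_adj.mpr he
    exact ((hGdel x y).mp hadj).2 rfl
  obtain ⟨C3⟩ := hcrit Gdel hne
  let c : V → Fin 3 := fun v => C3 ⟨v, Set.mem_univ v⟩
  have hc : ∀ a b, G.Adj a b → s(a, b) ≠ s(x, y) → c a ≠ c b := by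
    intro a b h1 h2 hcc
    exact C3.valid
      (show Gdel.coe.Adj ⟨a, Set.mem_univ a⟩ ⟨b, Set.mem_univ b⟩ from (hGdel a b).mpr ⟨h1, h2⟩)
      hcc
  -- x and y get the same color
  have hxy_col : c x = c y := by
    by_contra hne'
    apply hnotcol c
    intro a b hab
    by_cases hs : s(a, b) = s(x, y)
    · rw [Sym2.eq_iff] at hs
      rcases hs with ⟨rfl, rfl⟩ | ⟨rfl, rfl⟩
      · exact hne'
      · exact fun hh => hne' hh.symm
    · exact hc a b hab hs
  -- set up the other two colors
  obtain ⟨j, k, hij, hik, hjk⟩ :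
      ∃ j k : Fin 3, c x ≠ j ∧ c x ≠ k ∧ j ≠ k := by
    have : ∀ i : Fin 3, ∃ j k : Fin 3, i ≠ j ∧ i ≠ k ∧ j ≠ k := by decide
    exact this (c x)
  -- the Kempe-chain graph on vertices not colored k
  let H : SimpleGraph V :=
    { Adj := fun a b => G.Adj a b ∧ s(a, b) ≠ s(x, y) ∧ c a ≠ k ∧ c b ≠ k
      symm := by
        constructor
        intro a b hab
        refine ⟨hab.1.symm, ?_, hab.2.2.2, hab.2.2.1⟩
        rw [Sym2.eq_swap]; exact hab.2.1
      loopless := ⟨fun a h => G.loopless.irrefl a h.1⟩ }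
  have hHdef : ∀ a b, H.Adj a b ↔ (G.Adj a b ∧ s(a, b) ≠ s(x, y) ∧ c a ≠ k ∧ c b ≠ k) :=
    fun a b => Iff.rfl
  have hHcol : ∀ a b, H.Adj a b → c a ≠ c b ∧ c a ≠ k ∧ c b ≠ k := by
    intro a b h
    obtain ⟨h1, h2, h3⟩ := (hHdef a b).mp h
    exact ⟨hc a b h1 h2, h3⟩
  have hreach_ne : ∀ v, H.Reachable x v → c v ≠ k := by
    intro v hv
    obtain ⟨w⟩ := hv
    exact walk_support_ne (fun a b h => ((hHdef a b).mp h).2.2) w hik v w.end_mem_support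
  -- Kempe chain: x and y are H-reachable
  have hreach : H.Reachable x y := by
    by_contra hr
    apply hnotcol (fun v => if H.Reachable x v then Equiv.swap (c x) j (c v) else c v)
    intro a b hab hcc
    have hswap_ne_k : ∀ z : Fin 3, z ≠ k → Equiv.swap (c x) j z ≠ k := by
      intro z hz h
      apply hz
      have hkk : Equiv.swap (c x) j k = k :=
        Equiv.swap_apply_of_ne_of_ne (Ne.symm hik) (Ne.symm hjk)
      exact (Equiv.swap (c x) j).injective (h.trans hkk.symm)
    by_cases hs : s(a, b) = s(x, y)
    · -- the deleted edge: endpoints are x, y in some order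
      rw [Sym2.eq_iff] at hs
      have hx_reach : H.Reachable x x := Reachable.refl x
      rcases hs with ⟨rfl, rfl⟩ | ⟨rfl, rfl⟩
      · rw [if_pos hx_reach, if_neg hr, Equiv.swap_apply_left, ← hxy_col] at hcc
        exact hij hcc.symm
      · rw [if_neg hr, if_pos hx_reach, Equiv.swap_apply_left, ← hxy_col] at hcc
        exact hij hcc
    · -- an edge of G - e
      have hab' := hc a b hab hs
      by_cases hra : H.Reachable x a <;> by_cases hrb : H.Reachable x b
      · rw [if_pos hra, if_pos hrb] at hcc
        exact hab' ((Equiv.swap (c x) j).injective hcc)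
      · have hca := hreach_ne a hra
        have hcb : c b = k := by
          by_contra hcb
          exact hrb (hra.trans (Adj.reachable ((hHdef a b).mpr ⟨hab, hs, hca, hcb⟩)))
        rw [if_pos hra, if_neg hrb, hcb] at hcc
        exact hswap_ne_k (c a) hca hcc
      · have hcb := hreach_ne b hrb
        have hca : c a = k := by
          by_contra hca
          exact hra (hrb.trans (Adj.reachable ((hHdef b a).mpr
            ⟨hab.symm, by rw [Sym2.eq_swap]; exact hs, hcb, hca⟩)))
        rw [if_neg hra, if_pos hrb, hca] at hcc
        exact hswap_ne_k (c b) hcb hcc.symm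
      · rw [if_neg hra, if_neg hrb] at hcc
        exact hab' hcc
  -- take a shortest H-path from x to y
  obtain ⟨P, hPpath, hPlen⟩ := hreach.exists_path_of_dist
  have hmin : ∀ Q : H.Walk x y, P.length ≤ Q.length := fun Q => hPlen ▸ H.dist_le Q
  have hsup : ∀ z ∈ P.support, c z ≠ k :=
    walk_support_ne (fun a b h => ((hHdef a b).mp h).2.2) P hik
  have hpar : Even P.length :=
    (walk_parity hHcol P (by rw [← hxy_col]; exact hik)).mp hxy_col
  have hne0 : P.length ≠ 0 := fun h => he.ne (Walk.eq_of_length_eq_zero h)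
  -- build the cycle through the edge
  have hPG : ∀ e' ∈ P.edges, e' ∈ G.edgeSet := by
    intro e' he'
    have := P.edges_subset_edgeSet he'
    exact edgeSet_mono (fun a b h => ((hHdef a b).mp h).1) this
  let PG : G.Walk x y := P.transfer G hPG
  let C : G.Walk y y := Walk.cons he.symm PG
  have hCdef : C = Walk.cons he.symm (P.transfer G hPG) := rfl
  have hCedges : C.edges = s(y, x) :: P.edges := by
    rw [hCdef, Walk.edges_cons, Walk.edges_transfer]
  have hCcyc : C.IsCycle := by
    rw [hCdef, Walk.cons_isCycle_iff]
    refine ⟨hPpath.transfer hPG, ?_⟩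
    intro hmem
    rw [Walk.edges_transfer] at hmem
    have := P.edges_subset_edgeSet hmem
    rw [mem_edgeSet] at this
    apply ((hHdef y x).mp this).2.1
    rw [Sym2.eq_swap]
  have hClen : C.length = P.length + 1 := by
    rw [hCdef, Walk.length_cons, Walk.length_transfer]
  have hCmem : s(x, y) ∈ C.edges := by
    rw [hCedges, Sym2.eq_swap]
    exact List.mem_cons_self
  by_cases h4 : P.length = 4
  · exact ⟨y, C, hCcyc, by omega, hCmem⟩
  -- otherwise derive a contradiction
  exfalso
  have hCsup : C.support = y :: P.support := by
    rw [hCdef, Walk.support_cons, Walk.support_transfer]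
  by_cases h2 : P.length = 2
  · -- a triangle, contradicting girth 5
    have h5 : ((2 * 2 + 1 : ℕ) : ℕ∞) ≤ (C.length : ℕ∞) :=
      le_egirth.mp (le_of_eq hgirth.symm) y C hCcyc
    have h5' : (5 : ℕ) ≤ C.length := by exact_mod_cast h5
    omega
  · -- an induced odd cycle of length ≥ 7, contradicting no long odd holes
    have hlen6 : 6 ≤ P.length := by
      obtain ⟨m, hm⟩ := hpar
      omega
    have hinduced : C.toSubgraph.IsInduced := by
      intro u hu v hv huv
      rw [Walk.mem_verts_toSubgraph, hCsup, List.mem_cons] at hu hv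
      have hu' : u ∈ P.support := by
        rcases hu with rfl | hu
        · exact P.end_mem_support
        · exact hu
      have hv' : v ∈ P.support := by
        rcases hv with rfl | hv
        · exact P.end_mem_support
        · exact hv
      rw [← Subgraph.mem_edgeSet, Walk.mem_edges_toSubgraph]
      by_cases hs : s(u, v) = s(x, y)
      · rw [hs]
        exact hCmem
      · have hadj : H.Adj u v := (hHdef u v).mpr ⟨huv, hs, hsup u hu', hsup v hv'⟩
        have := chord_mem_edges P hmin u v hadj hu' hv'
        rw [hCedges]
        exact List.mem_cons_of_mem _ this
    have hodd : Odd C.length := by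
      obtain ⟨m, hm⟩ := hpar
      exact ⟨m, by omega⟩
    exact hholes C.length hodd (by omega) ⟨by omega, y, C, hCcyc, hinduced, rfl⟩
end

section
/- Let G be a graph in 𝒢₀. Then the minimum degree of G is at least 4. -/
open SimpleGraph

section Aux

variable {V : Type*}

/-- The Kempe subgraph on colors `i, j`, avoiding vertex `v`. -/
private def KG (G : SimpleGraph V) (c : V → Fin 3) (v : V) (i j : Fin 3) : SimpleGraph V where
  Adj u w := G.Adj u w ∧ u ≠ v ∧ w ≠ v ∧ (c u = i ∨ c u = j) ∧ (c w = i ∨ c w = j)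
  symm := ⟨fun u w ⟨h, h1, h2, h3, h4⟩ => ⟨h.symm, h2, h1, h4, h3⟩⟩
  loopless := ⟨fun u h => G.irrefl h.1⟩

private lemma KG_le (G : SimpleGraph V) (c : V → Fin 3) (v : V) (i j : Fin 3) :
    KG G c v i j ≤ G := fun _ _ h => h.1

private lemma KG_support_ne {G : SimpleGraph V} {c : V → Fin 3} {v : V} {i j : Fin 3}
    {s t : V} (p : (KG G c v i j).Walk s t) (hs : s ≠ v) :
    ∀ u ∈ p.support, u ≠ v := by
  induction p with
  | nil => intro u hu; simp at hu; subst hu; exact hs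
  | cons h q ih =>
      intro u hu
      rw [Walk.support_cons, List.mem_cons] at hu
      rcases hu with rfl | hu
      · exact hs
      · exact ih h.2.2.1 u hu

private lemma KG_support_col {G : SimpleGraph V} {c : V → Fin 3} {v : V} {i j : Fin 3}
    {s t : V} (p : (KG G c v i j).Walk s t) (hs : c s = i ∨ c s = j) :
    ∀ u ∈ p.support, c u = i ∨ c u = j := by
  induction p with
  | nil => intro u hu; simp at hu; subst hu; exact hs
  | cons h q ih =>
      intro u hu
      rw [Walk.support_cons, List.mem_cons] at hu
      rcases hu with rfl | hu
      · exact hs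
      · exact ih h.2.2.2.2 u hu

private lemma KG_parity {G : SimpleGraph V} {c : V → Fin 3} {v : V} {i j : Fin 3}
    (hij : i ≠ j)
    (hc : ∀ u w, G.Adj u w → u ≠ v → w ≠ v → c u ≠ c w) :
    ∀ {s t : V} (p : (KG G c v i j).Walk s t),
      (Even p.length ↔ (c s = i ↔ c t = i)) := by
  intro s t p
  induction p with
  | nil => simp
  | cons h q ih =>
      rename_i s s' t'
      have hne : c s ≠ c s' := hc _ _ h.1 h.2.1 h.2.2.1
      have hflip : (c s = i) ↔ ¬ (c s' = i) := by
        rcases h.2.2.2.1 with h1 | h1 <;> rcases h.2.2.2.2 with h2 | h2 <;>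
          (try simp_all) <;> exact fun hh => hij hh.symm
      rw [Walk.length_cons, Nat.even_add_one, ih]
      tauto

/-- On a shortest walk, any edge of the graph between two support vertices is an edge
of the walk. -/
private lemma shortest_chord {G' : SimpleGraph V} :
    ∀ {s t : V} (p : G'.Walk s t), p.length = G'.dist s t →
      ∀ {u w : V}, u ∈ p.support → w ∈ p.support → G'.Adj u w →
        s(u, w) ∈ p.edges := by
  classical
  intro s t p
  induction p with
  | nil =>
      intro _ u w hu hw hadj
      simp only [Walk.support_nil, List.mem_singleton] at hu hw
      subst hu; subst hw
      exact absurd hadj (G'.irrefl)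
  | cons h q ih =>
      rename_i s s₁ t'
      intro hlen
      have hreach : G'.Reachable s₁ t' := ⟨q⟩
      obtain ⟨q', hq'⟩ := hreach.exists_walk_length_eq_dist
      have hd1 : G'.dist s₁ t' ≤ q.length := dist_le q
      have hd2 : G'.dist s t' ≤ G'.dist s₁ t' + 1 := by
        have := dist_le (Walk.cons h q')
        simpa [hq'] using this
      rw [Walk.length_cons] at hlen
      have hq : q.length = G'.dist s₁ t' := by omega
      have key : ∀ w ∈ q.support, G'.Adj s w → w = s₁ := by
        intro w hw hadj
        by_contra hne
        have hsplit := q.take_spec hw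
        have hklen : (q.takeUntil w hw).length + (q.dropUntil w hw).length = q.length := by
          rw [← Walk.length_append, hsplit]
        have hdrop : G'.dist s t' ≤ (q.dropUntil w hw).length + 1 := by
          have := dist_le (Walk.cons hadj (q.dropUntil w hw))
          simpa using this
        have hk0 : (q.takeUntil w hw).length = 0 := by omega
        exact hne (Walk.eq_of_length_eq_zero hk0).symm
      intro u w hu hw hadj
      rw [Walk.support_cons, List.mem_cons] at hu hw
      rw [Walk.edges_cons, List.mem_cons]
      rcases hu with rfl | hu <;> rcases hw with rfl | hw
      · exact absurd hadj (G'.irrefl)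
      · left; rw [key w hw hadj]
      · left; rw [key u hu hadj.symm, Sym2.eq_swap]
      · right; exact ih hq hu hw hadj

private lemma no_triangle {G : SimpleGraph V}
    (h5 : ∀ {x : V} (w : G.Walk x x), w.IsCycle → 5 ≤ w.length)
    {a b c : V} (hab : G.Adj a b) (hbc : G.Adj b c) (hca : G.Adj c a) : False := by
  classical
  have n1 := hab.ne; have n1' := hab.ne'; have n2 := hbc.ne; have n2' := hbc.ne'
  have n3 := hca.ne; have n3' := hca.ne'
  set W : G.Walk a a := Walk.cons hab (Walk.cons hbc (Walk.cons hca Walk.nil)) with hW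
  have hcyc : W.IsCycle := by
    rw [hW, Walk.cons_isCycle_iff]
    constructor
    · simp only [Walk.cons_isPath_iff, Walk.isPath_iff_eq_nil, Walk.support_cons,
        Walk.support_nil, List.mem_cons, List.mem_singleton]
      refine ⟨⟨?_, ?_⟩, ?_⟩ <;> tauto
    · simp only [Walk.edges_cons, Walk.edges_nil, List.mem_cons, List.mem_singleton,
        Sym2.eq_iff]
      tauto
  have := h5 W hcyc
  simp [hW] at this

private lemma no_c4 {G : SimpleGraph V}
    (h5 : ∀ {x : V} (w : G.Walk x x), w.IsCycle → 5 ≤ w.length)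
    {a b c d : V} (hab : G.Adj a b) (hbc : G.Adj b c) (hcd : G.Adj c d)
    (hda : G.Adj d a) (hac : a ≠ c) (hbd : b ≠ d) : False := by
  classical
  have n1 := hab.ne; have n1' := hab.ne'; have n2 := hbc.ne; have n2' := hbc.ne'
  have n3 := hcd.ne; have n3' := hcd.ne'; have n4 := hda.ne; have n4' := hda.ne'
  have n5 := hac; have n5' := hac.symm; have n6 := hbd; have n6' := hbd.symm
  set W : G.Walk a a :=
    Walk.cons hab (Walk.cons hbc (Walk.cons hcd (Walk.cons hda Walk.nil))) with hW
  have hcyc : W.IsCycle := by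
    rw [hW, Walk.cons_isCycle_iff]
    constructor
    · simp only [Walk.cons_isPath_iff, Walk.isPath_iff_eq_nil, Walk.support_cons,
        Walk.support_nil, List.mem_cons, List.mem_singleton]
      refine ⟨⟨⟨?_, ?_⟩, ?_⟩, ?_⟩ <;> tauto
    · simp only [Walk.edges_cons, Walk.edges_nil, List.mem_cons, List.mem_singleton,
        Sym2.eq_iff]
      tauto
  have := h5 W hcyc
  simp [hW] at this

private lemma adj_of_length_one {G' : SimpleGraph V} {s t : V} (p : G'.Walk s t)
    (h : p.length = 1) : G'.Adj s t := by
  cases p with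
  | nil => simp at h
  | cons h' q =>
      have h0 : q.length = 0 := by simpa using h
      have := Walk.eq_of_length_eq_zero h0
      subst this
      exact h'

private lemma walk_length_three {G' : SimpleGraph V} {s t : V} (p : G'.Walk s t)
    (h : p.length = 3) :
    ∃ (a b : V) (h1 : G'.Adj s a) (h2 : G'.Adj a b) (h3 : G'.Adj b t),
      p = Walk.cons h1 (Walk.cons h2 (Walk.cons h3 Walk.nil)) := by
  cases p with
  | nil => simp at h
  | cons h1 q =>
    cases q with
    | nil => simp at h
    | cons h2 r =>
      cases r with
      | nil => simp at h
      | cons h3 s' =>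
        have h0 : s'.length = 0 := by simpa using h
        have heq := Walk.eq_of_length_eq_zero h0
        subst heq
        have : s' = Walk.nil := Walk.nil_iff_eq_nil.mp (Walk.length_eq_zero_iff.mp h0)
        subst this
        exact ⟨_, _, h1, h2, h3, rfl⟩

private lemma KG_hole {G : SimpleGraph V} {c : V → Fin 3} {v : V} {i j k : Fin 3}
    {xi xj xk : V}
    (hc : ∀ u w, G.Adj u w → u ≠ v → w ≠ v → c u ≠ c w)
    (hij : i ≠ j) (hik : i ≠ k) (hjk : j ≠ k)
    (hvi : G.Adj v xi) (hvj : G.Adj v xj)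
    (hci : c xi = i) (hcj : c xj = j) (hck : c xk = k)
    (hN : ∀ u, G.Adj v u → u = xi ∨ u = xj ∨ u = xk)
    (p : (KG G c v i j).Walk xi xj) (hpath : p.IsPath)
    (hdist : p.length = (KG G c v i j).dist xi xj)
    (hl3 : 3 ≤ p.length) :
    G.HasHole (p.length + 2) := by
  classical
  have hxij : xi ≠ xj := fun h => hij (by rw [← hci, h, hcj])
  have hnev : ∀ u ∈ p.support, u ≠ v := KG_support_ne p hvi.ne'
  have hcolS : ∀ u ∈ p.support, c u = i ∨ c u = j := KG_support_col p (Or.inl hci)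
  set p' : G.Walk xi xj := p.transfer G
    (fun e he => (edgeSet_mono (KG_le G c v i j)) (p.edges_subset_edgeSet he)) with hp'
  have hsupp' : p'.support = p.support := by
    simp [hp', Walk.support_transfer]
  have hedges' : p'.edges = p.edges := by
    simp [hp', Walk.edges_transfer]
  have hlen' : p'.length = p.length := by
    simp [hp', Walk.length_transfer]
  set P : G.Walk xi v := p'.concat hvj.symm with hP
  set W : G.Walk v v := Walk.cons hvi P with hW
  have hWsupp : W.support = v :: (p.support ++ [v]) := by
    simp [hW, hP, Walk.support_cons, Walk.support_concat, hsupp']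
  have hWedges : W.edges = s(v, xi) :: (p.edges ++ [s(xj, v)]) := by
    simp [hW, hP, Walk.edges_cons, Walk.edges_concat, hedges']
  have hWlen : W.length = p.length + 2 := by
    simp [hW, hP, Walk.length_cons, Walk.length_concat, hlen']
  have hvnotp : v ∉ p.support := fun h => (hnev v h) rfl
  have hvnotpe : ∀ z : V, s(v, z) ∉ p.edges := fun z h =>
    hvnotp (p.fst_mem_support_of_mem_edges h)
  have hvnotpe' : ∀ z : V, s(z, v) ∉ p.edges := fun z h =>
    hvnotp (p.snd_mem_support_of_mem_edges h)
  have hcyc : W.IsCycle := by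
    rw [Walk.isCycle_def]
    refine ⟨?_, by simp [hW], ?_⟩
    · rw [Walk.isTrail_def, hWedges]
      rw [List.nodup_cons, List.mem_append]
      refine ⟨?_, ?_⟩
      · push_neg
        refine ⟨hvnotpe xi, ?_⟩
        simp only [List.mem_singleton, Sym2.eq_iff]
        push_neg
        exact ⟨fun _ h2 => hvi.ne h2.symm, fun _ => hxij⟩
      · rw [List.nodup_append]
        refine ⟨hpath.isTrail.edges_nodup, List.nodup_singleton _, ?_⟩
        intro e he
        simp only [List.mem_singleton]
        intro b hb; subst hb; intro h; subst h
        exact hvnotpe' xj he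
    · have htail : W.support.tail = p.support ++ [v] := by rw [hWsupp]; rfl
      rw [htail, List.nodup_append]
      exact ⟨hpath.support_nodup, List.nodup_singleton _,
        fun z hz => by simp only [List.mem_singleton]; intro b hb; subst hb; intro h; subst h; exact hvnotp hz⟩
  have hmemW : ∀ {u : V}, u ∈ W.support ↔ (u = v ∨ u ∈ p.support) := by
    intro u
    rw [hWsupp]
    simp only [List.mem_cons, List.mem_append, List.mem_singleton]
    tauto
  have hAdjOf : ∀ {u w : V}, s(u, w) ∈ W.edges → W.toSubgraph.Adj u w := by
    intro u w h
    exact Subgraph.mem_edgeSet.mp ((W.mem_edges_toSubgraph).mpr h)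
  have hInd : W.toSubgraph.IsInduced := by
    intro u hu w hw hadj
    rw [Walk.mem_verts_toSubgraph, hmemW] at hu hw
    have key : ∀ u' w' : V, (u' = v) → (w' = v ∨ w' ∈ p.support) → G.Adj u' w' →
        W.toSubgraph.Adj u' w' := by
      intro u' w' hu' hw' hadj'
      subst hu'
      rcases hw' with rfl | hw'
      · exact absurd rfl hadj'.ne
      · rcases hN w' hadj' with rfl | rfl | rfl
        · exact hAdjOf (by rw [hWedges]; simp)
        · apply hAdjOf
          rw [hWedges, Sym2.eq_swap]
          simp
        · rcases hcolS _ hw' with h | h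
          · exact absurd (hck ▸ h) (Ne.symm hik)
          · exact absurd (hck ▸ h) (Ne.symm hjk)
    rcases hu with rfl | hu
    · exact key _ _ rfl hw hadj
    · rcases hw with rfl | hw
      · exact (key _ _ rfl (Or.inr hu) hadj.symm).symm
      · have hKadj : (KG G c v i j).Adj u w :=
          ⟨hadj, hnev u hu, hnev w hw, hcolS u hu, hcolS w hw⟩
        have hch := shortest_chord p hdist hu hw hKadj
        apply hAdjOf
        rw [hWedges]
        simp only [List.mem_cons, List.mem_append]
        tauto
  exact ⟨by omega, v, W, hcyc, hInd, hWlen⟩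

end Aux

set_option maxHeartbeats 2000000 in
/-- every graph `G ∈ 𝒢₀` has minimum degree at least 4. -/
theorem stmt_4 {V : Type*} [Fintype V] (G : SimpleGraph V) (hG : G.MemG0) :
    ∀ v : V, 4 ≤ (G.neighborSet v).ncard := by
  classical
  obtain ⟨⟨hgirth, hodd⟩, hchrom, hcrit⟩ := hG
  intro v
  by_contra hv
  push_neg at hv
  have notCol : ¬ G.Colorable 3 := by
    intro h
    have h2 := h.chromaticNumber_le
    rw [hchrom] at h2
    norm_num at h2
  have h5 : ∀ {x : V} (w : G.Walk x x), w.IsCycle → 5 ≤ w.length := by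
    intro x w hw
    have h5' : (5 : ℕ∞) ≤ G.egirth := by rw [hgirth]; norm_num
    have := le_egirth.mp h5' x w hw
    exact_mod_cast this
  obtain ⟨c0, hc0⟩ : ∃ c : V → Fin 3, ∀ u w, G.Adj u w → u ≠ v → w ≠ v → c u ≠ c w := by
    set H := (⊤ : G.Subgraph).deleteVerts {v} with hH
    have hne : H ≠ ⊤ := by
      intro h
      have hmem : v ∈ H.verts := by rw [h]; simp
      rw [hH] at hmem
      simp [Subgraph.deleteVerts_verts] at hmem
    obtain ⟨C⟩ := hcrit H hne
    refine ⟨fun u => if h : u ∈ H.verts then C ⟨u, h⟩ else 0, ?_⟩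
    intro u w hadj hu hw
    have hu' : u ∈ H.verts := by rw [hH]; simp [Subgraph.deleteVerts_verts, hu]
    have hw' : w ∈ H.verts := by rw [hH]; simp [Subgraph.deleteVerts_verts, hw]
    have hHadj : H.Adj u w := by
      rw [hH]
      simp [Subgraph.deleteVerts_adj, hu, hw, hadj]
    have hvalid := C.valid (show H.coe.Adj ⟨u, hu'⟩ ⟨w, hw'⟩ from hHadj)
    simpa [hu', hw'] using hvalid
  have ext1 : ∀ (c : V → Fin 3), (∀ u w, G.Adj u w → u ≠ v → w ≠ v → c u ≠ c w) →
      ∀ k : Fin 3, (∀ u, G.Adj v u → c u ≠ k) → False := by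
    intro c hc k hk
    apply notCol
    refine ⟨Coloring.mk (fun u => if u = v then k else c u) ?_⟩
    intro u w hadj
    by_cases hu : u = v <;> by_cases hw : w = v
    · subst hu; subst hw; exact absurd hadj G.irrefl
    · subst hu
      simp only [if_pos rfl, if_neg hw]
      exact (hk w hadj).symm
    · subst hw
      simp only [if_pos rfl, if_neg hu]
      exact hk u hadj.symm
    · simp only [if_neg hu, if_neg hw]
      exact hc u w hadj hu hw
  have allcol : ∀ (c : V → Fin 3), (∀ u w, G.Adj u w → u ≠ v → w ≠ v → c u ≠ c w) →
      ∀ k : Fin 3, ∃ u, G.Adj v u ∧ c u = k := by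
    intro c hc k
    by_contra h
    push_neg at h
    exact ext1 c hc k h
  obtain ⟨x1, hvx1, hcx1⟩ := allcol c0 hc0 0
  obtain ⟨x2, hvx2, hcx2⟩ := allcol c0 hc0 1
  obtain ⟨x3, hvx3, hcx3⟩ := allcol c0 hc0 2
  have nec : ∀ y z : V, c0 y ≠ c0 z → y ≠ z := fun y z h he => h (he ▸ rfl)
  have n12 : x1 ≠ x2 := nec _ _ (by rw [hcx1, hcx2]; decide)
  have n13 : x1 ≠ x3 := nec _ _ (by rw [hcx1, hcx3]; decide)
  have n23 : x2 ≠ x3 := nec _ _ (by rw [hcx2, hcx3]; decide)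
  have hNeq : ({x1, x2, x3} : Set V) = G.neighborSet v := by
    apply Set.eq_of_subset_of_ncard_le (ht := Set.toFinite _)
    · intro u hu
      rcases hu with rfl | rfl | rfl
      · exact hvx1
      · exact hvx2
      · exact hvx3
    · have h3 : ({x1, x2, x3} : Set V).ncard = 3 := by
        rw [Set.ncard_insert_of_notMem (by simp [n12, n13]),
          Set.ncard_pair n23]
      omega
  have hN : ∀ u, G.Adj v u → u = x1 ∨ u = x2 ∨ u = x3 := by
    intro u hu
    have : u ∈ ({x1, x2, x3} : Set V) := by rw [hNeq]; exact hu
    simpa using this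
  have kreach : ∀ (i j k : Fin 3) (xi xj xk : V), i ≠ j → i ≠ k → j ≠ k →
      G.Adj v xi → G.Adj v xj →
      c0 xi = i → c0 xj = j → c0 xk = k →
      (∀ u, G.Adj v u → u = xi ∨ u = xj ∨ u = xk) →
      (KG G c0 v i j).Reachable xi xj := by
    intro i j k xi xj xk hij hik hjk hvi hvj hci hcj hck hNp
    by_contra hre
    set c1 : V → Fin 3 := fun u =>
      if (KG G c0 v i j).Reachable xi u then Equiv.swap i j (c0 u) else c0 u with hc1
    have hc1prop : ∀ u w, G.Adj u w → u ≠ v → w ≠ v → c1 u ≠ c1 w := by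
      intro u w hadj hu hw
      have base := hc0 u w hadj hu hw
      by_cases ru : (KG G c0 v i j).Reachable xi u <;>
        by_cases rw' : (KG G c0 v i j).Reachable xi w
      · simp only [hc1, if_pos ru, if_pos rw']
        exact fun h => base ((Equiv.swap i j).injective h)
      · simp only [hc1, if_pos ru, if_neg rw']
        by_cases hSu : c0 u = i ∨ c0 u = j
        · by_cases hSw : c0 w = i ∨ c0 w = j
          · exact absurd (ru.trans (Adj.reachable ⟨hadj, hu, hw, hSu, hSw⟩)) rw'
          · intro h
            apply hSw
            rcases hSu with h1 | h1 <;> rw [h1] at h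
            · rw [Equiv.swap_apply_left] at h; right; exact h.symm
            · rw [Equiv.swap_apply_right] at h; left; exact h.symm
        · push_neg at hSu
          rw [Equiv.swap_apply_of_ne_of_ne hSu.1 hSu.2]
          exact base
      · simp only [hc1, if_neg ru, if_pos rw']
        by_cases hSw : c0 w = i ∨ c0 w = j
        · by_cases hSu : c0 u = i ∨ c0 u = j
          · exact absurd (rw'.trans (Adj.reachable ⟨hadj.symm, hw, hu, hSw, hSu⟩)) ru
          · intro h
            apply hSu
            rcases hSw with h1 | h1 <;> rw [h1] at h
            · rw [Equiv.swap_apply_left] at h; right; exact h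
            · rw [Equiv.swap_apply_right] at h; left; exact h
        · push_neg at hSw
          rw [Equiv.swap_apply_of_ne_of_ne hSw.1 hSw.2]
          exact base
      · simp only [hc1, if_neg ru, if_neg rw']
        exact base
    apply ext1 c1 hc1prop i
    intro u hu
    rcases hNp u hu with rfl | rfl | rfl
    · have : c1 u = j := by
        simp only [hc1, if_pos (Reachable.refl u), hci, Equiv.swap_apply_left]
      rw [this]; exact Ne.symm hij
    · have : c1 u = j := by simp only [hc1, if_neg hre, hcj]
      rw [this]; exact Ne.symm hij
    · have hnr : ¬ (KG G c0 v i j).Reachable xi u := by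
        intro hr
        obtain ⟨w⟩ := hr
        have hcol := KG_support_col w (Or.inl hci) u (Walk.end_mem_support w)
        rw [hck] at hcol
        rcases hcol with h | h
        · exact hik h.symm
        · exact hjk h.symm
      have : c1 u = k := by simp only [hc1, if_neg hnr, hck]
      rw [this]; exact Ne.symm hik
  have getpath : ∀ (i j k : Fin 3) (xi xj xk : V), i ≠ j → i ≠ k → j ≠ k →
      G.Adj v xi → G.Adj v xj →
      c0 xi = i → c0 xj = j → c0 xk = k →
      (∀ u, G.Adj v u → u = xi ∨ u = xj ∨ u = xk) →
      ∃ (a b : V) (_ : (KG G c0 v i j).Adj xi a) (_ : (KG G c0 v i j).Adj a b)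
        (_ : (KG G c0 v i j).Adj b xj),
        xi ≠ a ∧ xi ≠ b ∧ xi ≠ xj ∧ a ≠ b ∧ a ≠ xj ∧ b ≠ xj := by
    intro i j k xi xj xk hij hik hjk hvi hvj hci hcj hck hNp
    obtain ⟨p, hppath, hplen⟩ :=
      (kreach i j k xi xj xk hij hik hjk hvi hvj hci hcj hck hNp).exists_path_of_dist
    have hoddlen : ¬ Even p.length := by
      have hpar := KG_parity hij hc0 p
      rw [hpar, hci, hcj]
      simp [Ne.symm hij]
    have hmod : p.length % 2 = 1 := Nat.not_even_iff.mp hoddlen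
    have hne1 : p.length ≠ 1 := by
      intro h1
      have hadj := adj_of_length_one p h1
      exact no_triangle h5 hvi hadj.1 hvj.symm
    have hlen3 : p.length = 3 := by
      by_contra hne3
      have hole := KG_hole hc0 hij hik hjk hvi hvj hci hcj hck hNp p hppath hplen (by omega)
      exact hodd (p.length + 2) (Nat.odd_iff.mpr (by omega)) (by omega) hole
    obtain ⟨a, b, h1, h2, h3, hpeq⟩ := walk_length_three p hlen3
    have hnd := hppath.support_nodup
    rw [hpeq] at hnd
    simp only [Walk.support_cons, Walk.support_nil, List.nodup_cons, List.mem_cons,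
      List.mem_singleton, List.not_mem_nil, or_false, List.nodup_nil, and_true,
      not_or] at hnd
    exact ⟨a, b, h1, h2, h3, by tauto⟩
  have hKresolve : ∀ (i j : Fin 3) (y z : V), (KG G c0 v i j).Adj y z →
      c0 y ≠ c0 z := fun i j y z h => hc0 y z h.1 h.2.1 h.2.2.1
  obtain ⟨a, b, k1, k2, k3, na1, na2, na3, na4, na5, na6⟩ :=
    getpath 0 1 2 x1 x2 x3 (by decide) (by decide) (by decide) hvx1 hvx2 hcx1 hcx2 hcx3 hN
  obtain ⟨pp, qq, m1, m2, m3, nb1, nb2, nb3, nb4, nb5, nb6⟩ :=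
    getpath 0 2 1 x1 x3 x2 (by decide) (by decide) (by decide) hvx1 hvx3 hcx1 hcx3 hcx2
      (fun u hu => by rcases hN u hu with h | h | h <;> tauto)
  obtain ⟨r, s, q1, q2, q3, nc1, nc2, nc3, nc4, nc5, nc6⟩ :=
    getpath 1 2 0 x2 x3 x1 (by decide) (by decide) (by decide) hvx2 hvx3 hcx2 hcx3 hcx1
      (fun u hu => by rcases hN u hu with h | h | h <;> tauto)
  have hca : c0 a = 1 := by
    have hd := hKresolve _ _ _ _ k1; rw [hcx1] at hd
    rcases k1.2.2.2.2 with h | h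
    · exact absurd h.symm hd
    · exact h
  have hcb : c0 b = 0 := by
    have hd := hKresolve _ _ _ _ k2; rw [hca] at hd
    rcases k2.2.2.2.2 with h | h
    · exact h
    · exact absurd h.symm hd
  have hcpp : c0 pp = 2 := by
    have hd := hKresolve _ _ _ _ m1; rw [hcx1] at hd
    rcases m1.2.2.2.2 with h | h
    · exact absurd h.symm hd
    · exact h
  have hcqq : c0 qq = 0 := by
    have hd := hKresolve _ _ _ _ m2; rw [hcpp] at hd
    rcases m2.2.2.2.2 with h | h
    · exact h
    · exact absurd h.symm hd
  have hcr : c0 r = 2 := by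
    have hd := hKresolve _ _ _ _ q1; rw [hcx2] at hd
    rcases q1.2.2.2.2 with h | h
    · exact absurd h.symm hd
    · exact h
  have hcs : c0 s = 1 := by
    have hd := hKresolve _ _ _ _ q2; rw [hcr] at hd
    rcases q2.2.2.2.2 with h | h
    · exact h
    · exact absurd h.symm hd
  have hx1v : x1 ≠ v := hvx1.ne'
  have hx2v : x2 ≠ v := hvx2.ne'
  have hx3v : x3 ≠ v := hvx3.ne'
  have hav : a ≠ v := k1.2.2.1
  have hbv : b ≠ v := k2.2.2.1
  have hppv : pp ≠ v := m1.2.2.1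
  have hqqv : qq ≠ v := m2.2.2.1
  have hrv : r ≠ v := q1.2.2.1
  have hsv : s ≠ v := q2.2.2.1
  have e1 : G.Adj x1 a := k1.1
  have e2 : G.Adj a b := k2.1
  have e3 : G.Adj b x2 := k3.1
  have e4 : G.Adj x2 r := q1.1
  have e5 : G.Adj r s := q2.1
  have e6 : G.Adj s x3 := q3.1
  have e7 : G.Adj x3 qq := m3.1.symm
  have e8 : G.Adj qq pp := m2.1.symm
  have e9 : G.Adj pp x1 := m1.1.symm
  have nadjc : ∀ y z : V, y ≠ v → z ≠ v → c0 y = c0 z → ¬ G.Adj y z :=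
    fun y z hy hz hcc h => hc0 y z h hy hz hcc
  have d_x1_a : x1 ≠ a := nec _ _ (by rw [hcx1, hca]; decide)
  have d_x1_b : x1 ≠ b := na2
  have d_x1_x2 : x1 ≠ x2 := nec _ _ (by rw [hcx1, hcx2]; decide)
  have d_x1_r : x1 ≠ r := nec _ _ (by rw [hcx1, hcr]; decide)
  have d_x1_s : x1 ≠ s := nec _ _ (by rw [hcx1, hcs]; decide)
  have d_x1_x3 : x1 ≠ x3 := nec _ _ (by rw [hcx1, hcx3]; decide)
  have d_x1_qq : x1 ≠ qq := nb2
  have d_x1_pp : x1 ≠ pp := nec _ _ (by rw [hcx1, hcpp]; decide)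
  have d_a_b : a ≠ b := nec _ _ (by rw [hca, hcb]; decide)
  have d_a_x2 : a ≠ x2 := na5
  have d_a_r : a ≠ r := nec _ _ (by rw [hca, hcr]; decide)
  have d_a_s : a ≠ s := fun h => no_c4 h5 hvx1 e1 (by rw [h]; exact q3.1) hvx3.symm (Ne.symm hav) n13
  have d_a_x3 : a ≠ x3 := nec _ _ (by rw [hca, hcx3]; decide)
  have d_a_qq : a ≠ qq := nec _ _ (by rw [hca, hcqq]; decide)
  have d_a_pp : a ≠ pp := nec _ _ (by rw [hca, hcpp]; decide)
  have d_b_x2 : b ≠ x2 := nec _ _ (by rw [hcb, hcx2]; decide)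
  have d_b_r : b ≠ r := nec _ _ (by rw [hcb, hcr]; decide)
  have d_b_s : b ≠ s := nec _ _ (by rw [hcb, hcs]; decide)
  have d_b_x3 : b ≠ x3 := nec _ _ (by rw [hcb, hcx3]; decide)
  have d_b_qq : b ≠ qq := fun h => no_c4 h5 hvx2 e3.symm (by rw [h]; exact m3.1) hvx3.symm (Ne.symm hbv) n23
  have d_b_pp : b ≠ pp := nec _ _ (by rw [hcb, hcpp]; decide)
  have d_x2_r : x2 ≠ r := nec _ _ (by rw [hcx2, hcr]; decide)
  have d_x2_s : x2 ≠ s := nc2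
  have d_x2_x3 : x2 ≠ x3 := nec _ _ (by rw [hcx2, hcx3]; decide)
  have d_x2_qq : x2 ≠ qq := nec _ _ (by rw [hcx2, hcqq]; decide)
  have d_x2_pp : x2 ≠ pp := nec _ _ (by rw [hcx2, hcpp]; decide)
  have d_r_s : r ≠ s := nec _ _ (by rw [hcr, hcs]; decide)
  have d_r_x3 : r ≠ x3 := nc5
  have d_r_qq : r ≠ qq := nec _ _ (by rw [hcr, hcqq]; decide)
  have d_r_pp : r ≠ pp := fun h => no_c4 h5 hvx2 e4 (by rw [h]; exact e9) hvx1.symm (Ne.symm hrv) n12.symm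
  have d_s_x3 : s ≠ x3 := nec _ _ (by rw [hcs, hcx3]; decide)
  have d_s_qq : s ≠ qq := nec _ _ (by rw [hcs, hcqq]; decide)
  have d_s_pp : s ≠ pp := nec _ _ (by rw [hcs, hcpp]; decide)
  have d_x3_qq : x3 ≠ qq := nec _ _ (by rw [hcx3, hcqq]; decide)
  have d_x3_pp : x3 ≠ pp := nb5.symm
  have d_qq_pp : qq ≠ pp := nec _ _ (by rw [hcqq, hcpp]; decide)
  have d_a_x1 : a ≠ x1 := d_x1_a.symm
  have d_b_x1 : b ≠ x1 := d_x1_b.symm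
  have d_x2_x1 : x2 ≠ x1 := d_x1_x2.symm
  have d_r_x1 : r ≠ x1 := d_x1_r.symm
  have d_s_x1 : s ≠ x1 := d_x1_s.symm
  have d_x3_x1 : x3 ≠ x1 := d_x1_x3.symm
  have d_qq_x1 : qq ≠ x1 := d_x1_qq.symm
  have d_pp_x1 : pp ≠ x1 := d_x1_pp.symm
  have d_b_a : b ≠ a := d_a_b.symm
  have d_x2_a : x2 ≠ a := d_a_x2.symm
  have d_r_a : r ≠ a := d_a_r.symm
  have d_s_a : s ≠ a := d_a_s.symm
  have d_x3_a : x3 ≠ a := d_a_x3.symm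
  have d_qq_a : qq ≠ a := d_a_qq.symm
  have d_pp_a : pp ≠ a := d_a_pp.symm
  have d_x2_b : x2 ≠ b := d_b_x2.symm
  have d_r_b : r ≠ b := d_b_r.symm
  have d_s_b : s ≠ b := d_b_s.symm
  have d_x3_b : x3 ≠ b := d_b_x3.symm
  have d_qq_b : qq ≠ b := d_b_qq.symm
  have d_pp_b : pp ≠ b := d_b_pp.symm
  have d_r_x2 : r ≠ x2 := d_x2_r.symm
  have d_s_x2 : s ≠ x2 := d_x2_s.symm
  have d_x3_x2 : x3 ≠ x2 := d_x2_x3.symm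
  have d_qq_x2 : qq ≠ x2 := d_x2_qq.symm
  have d_pp_x2 : pp ≠ x2 := d_x2_pp.symm
  have d_s_r : s ≠ r := d_r_s.symm
  have d_x3_r : x3 ≠ r := d_r_x3.symm
  have d_qq_r : qq ≠ r := d_r_qq.symm
  have d_pp_r : pp ≠ r := d_r_pp.symm
  have d_x3_s : x3 ≠ s := d_s_x3.symm
  have d_qq_s : qq ≠ s := d_s_qq.symm
  have d_pp_s : pp ≠ s := d_s_pp.symm
  have d_qq_x3 : qq ≠ x3 := d_x3_qq.symm
  have d_pp_x3 : pp ≠ x3 := d_x3_pp.symm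
  have d_pp_qq : pp ≠ qq := d_qq_pp.symm
  have NA_x1_b : ¬ G.Adj x1 b := nadjc _ _ hx1v hbv (by rw [hcx1, hcb])
  have NA_b_x1 : ¬ G.Adj b x1 := fun h => NA_x1_b h.symm
  have NA_x1_qq : ¬ G.Adj x1 qq := nadjc _ _ hx1v hqqv (by rw [hcx1, hcqq])
  have NA_qq_x1 : ¬ G.Adj qq x1 := fun h => NA_x1_qq h.symm
  have NA_b_qq : ¬ G.Adj b qq := nadjc _ _ hbv hqqv (by rw [hcb, hcqq])
  have NA_qq_b : ¬ G.Adj qq b := fun h => NA_b_qq h.symm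
  have NA_a_x2 : ¬ G.Adj a x2 := nadjc _ _ hav hx2v (by rw [hca, hcx2])
  have NA_x2_a : ¬ G.Adj x2 a := fun h => NA_a_x2 h.symm
  have NA_a_s : ¬ G.Adj a s := nadjc _ _ hav hsv (by rw [hca, hcs])
  have NA_s_a : ¬ G.Adj s a := fun h => NA_a_s h.symm
  have NA_x2_s : ¬ G.Adj x2 s := nadjc _ _ hx2v hsv (by rw [hcx2, hcs])
  have NA_s_x2 : ¬ G.Adj s x2 := fun h => NA_x2_s h.symm
  have NA_r_x3 : ¬ G.Adj r x3 := nadjc _ _ hrv hx3v (by rw [hcr, hcx3])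
  have NA_x3_r : ¬ G.Adj x3 r := fun h => NA_r_x3 h.symm
  have NA_r_pp : ¬ G.Adj r pp := nadjc _ _ hrv hppv (by rw [hcr, hcpp])
  have NA_pp_r : ¬ G.Adj pp r := fun h => NA_r_pp h.symm
  have NA_x3_pp : ¬ G.Adj x3 pp := nadjc _ _ hx3v hppv (by rw [hcx3, hcpp])
  have NA_pp_x3 : ¬ G.Adj pp x3 := fun h => NA_x3_pp h.symm
  have NA_b_r : ¬ G.Adj b r := fun h => no_triangle h5 e3 e4 h.symm
  have NA_r_b : ¬ G.Adj r b := fun h => NA_b_r h.symm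
  have NA_s_qq : ¬ G.Adj s qq := fun h => no_triangle h5 e6 e7 h.symm
  have NA_qq_s : ¬ G.Adj qq s := fun h => NA_s_qq h.symm
  have NA_pp_a : ¬ G.Adj pp a := fun h => no_triangle h5 e9 e1 h.symm
  have NA_a_pp : ¬ G.Adj a pp := fun h => NA_pp_a h.symm
  have NA_x1_x2 : ¬ G.Adj x1 x2 := fun h => no_triangle h5 hvx1 h hvx2.symm
  have NA_x2_x1 : ¬ G.Adj x2 x1 := fun h => NA_x1_x2 h.symm
  have NA_x2_x3 : ¬ G.Adj x2 x3 := fun h => no_triangle h5 hvx2 h hvx3.symm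
  have NA_x3_x2 : ¬ G.Adj x3 x2 := fun h => NA_x2_x3 h.symm
  have NA_x1_x3 : ¬ G.Adj x1 x3 := fun h => no_triangle h5 hvx1 h hvx3.symm
  have NA_x3_x1 : ¬ G.Adj x3 x1 := fun h => NA_x1_x3 h.symm
  have NA_a_r : ¬ G.Adj a r := fun h => no_c4 h5 e2 e3 e4 h.symm d_a_x2 d_b_r
  have NA_r_a : ¬ G.Adj r a := fun h => NA_a_r h.symm
  have NA_b_s : ¬ G.Adj b s := fun h => no_c4 h5 e3 e4 e5 h.symm d_b_r d_x2_s
  have NA_s_b : ¬ G.Adj s b := fun h => NA_b_s h.symm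
  have NA_r_qq : ¬ G.Adj r qq := fun h => no_c4 h5 e5 e6 e7 h.symm d_r_x3 d_s_qq
  have NA_qq_r : ¬ G.Adj qq r := fun h => NA_r_qq h.symm
  have NA_s_pp : ¬ G.Adj s pp := fun h => no_c4 h5 e6 e7 e8 h.symm d_s_qq d_x3_pp
  have NA_pp_s : ¬ G.Adj pp s := fun h => NA_s_pp h.symm
  have NA_qq_a : ¬ G.Adj qq a := fun h => no_c4 h5 e8 e9 e1 h.symm d_qq_x1 d_pp_a
  have NA_a_qq : ¬ G.Adj a qq := fun h => NA_qq_a h.symm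
  have NA_pp_b : ¬ G.Adj pp b := fun h => no_c4 h5 e9 e1 e2 h.symm d_pp_a d_x1_b
  have NA_b_pp : ¬ G.Adj b pp := fun h => NA_pp_b h.symm
  have NA_x1_r : ¬ G.Adj x1 r := fun h => no_c4 h5 hvx1 h e4.symm hvx2.symm (Ne.symm hrv) n12
  have NA_r_x1 : ¬ G.Adj r x1 := fun h => NA_x1_r h.symm
  have NA_b_x3 : ¬ G.Adj b x3 := fun h => no_c4 h5 hvx2 e3.symm h hvx3.symm (Ne.symm hbv) n23
  have NA_x3_b : ¬ G.Adj x3 b := fun h => NA_b_x3 h.symm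
  have NA_x2_qq : ¬ G.Adj x2 qq := fun h => no_c4 h5 hvx2 h m3.1 hvx3.symm (Ne.symm hqqv) n23
  have NA_qq_x2 : ¬ G.Adj qq x2 := fun h => NA_x2_qq h.symm
  have NA_s_x1 : ¬ G.Adj s x1 := fun h => no_c4 h5 hvx3 e6.symm h hvx1.symm (Ne.symm hsv) n13.symm
  have NA_x1_s : ¬ G.Adj x1 s := fun h => NA_s_x1 h.symm
  have NA_x3_a : ¬ G.Adj x3 a := fun h => no_c4 h5 hvx3 h e1.symm hvx1.symm (Ne.symm hav) n13.symm
  have NA_a_x3 : ¬ G.Adj a x3 := fun h => NA_x3_a h.symm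
  have NA_pp_x2 : ¬ G.Adj pp x2 := fun h => no_c4 h5 hvx1 e9.symm h hvx2.symm (Ne.symm hppv) n12
  have NA_x2_pp : ¬ G.Adj x2 pp := fun h => NA_pp_x2 h.symm
  set W9 : G.Walk x1 x1 :=
    Walk.cons e1 (Walk.cons e2 (Walk.cons e3 (Walk.cons e4 (Walk.cons e5 (Walk.cons e6
      (Walk.cons e7 (Walk.cons e8 (Walk.cons e9 Walk.nil)))))))) with hW9
  have hW9edges : W9.edges =
      [s(x1,a), s(a,b), s(b,x2), s(x2,r), s(r,s), s(s,x3), s(x3,qq), s(qq,pp), s(pp,x1)] := by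
    simp [hW9]
  have hW9supp : W9.support = [x1, a, b, x2, r, s, x3, qq, pp, x1] := by
    simp [hW9]
  have hcyc9 : W9.IsCycle := by
    rw [Walk.isCycle_def]
    refine ⟨?_, by simp [hW9], ?_⟩
    · rw [Walk.isTrail_def, hW9edges]
      simp only [List.nodup_cons, List.mem_cons, List.not_mem_nil, or_false,
        List.mem_singleton, List.nodup_nil, and_true, not_or, Sym2.eq_iff]
      refine ⟨?_, ?_, ?_, ?_, ?_, ?_, ?_, ?_⟩ <;> constructorm* _ ∧ _ <;>
        first
          | assumption
          | exact not_false
          | exact fun hh => absurd hh.1 (by assumption)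
          | exact fun hh => absurd hh.2 (by assumption)
    · have htail : W9.support.tail = [a, b, x2, r, s, x3, qq, pp, x1] := by
        rw [hW9supp]; rfl
      rw [htail]
      simp only [List.nodup_cons, List.mem_cons, List.not_mem_nil, or_false,
        List.mem_singleton, List.nodup_nil, and_true, not_or]
      refine ⟨?_, ?_, ?_, ?_, ?_, ?_, ?_, ?_⟩ <;> constructorm* _ ∧ _ <;>
        first
          | assumption
          | exact not_false
          | exact fun hh => absurd hh.1 (by assumption)
          | exact fun hh => absurd hh.2 (by assumption)
  have hedge9 : ∀ y z : V, s(y, z) ∈ W9.edges → W9.toSubgraph.Adj y z := fun y z h =>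
    Subgraph.mem_edgeSet.mp ((W9.mem_edges_toSubgraph).mpr h)
  have hind9 : W9.toSubgraph.IsInduced := by
    intro u hu w hw hadj
    rw [Walk.mem_verts_toSubgraph, hW9supp] at hu hw
    simp only [List.mem_cons, List.not_mem_nil, or_false, List.mem_singleton] at hu hw
    rcases hu with rfl | rfl | rfl | rfl | rfl | rfl | rfl | rfl | rfl | rfl <;>
      rcases hw with rfl | rfl | rfl | rfl | rfl | rfl | rfl | rfl | rfl | rfl <;>
      first
        | exact absurd hadj G.irrefl
        | exact absurd hadj (by assumption)
        | exact hedge9 _ _ (by rw [hW9edges]; simp)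
  have hlen9 : W9.length = 9 := by simp [hW9]
  exact hodd 9 (by decide) (by norm_num) ⟨by norm_num, x1, W9, hcyc9, hind9, hlen9⟩
end

section
/- Every graph G in 𝒢₀ is 3-connected, i.e., G has more than 3 vertices and G − X is connected for every vertex set X with |X| ≤ 2. -/
open SimpleGraph

/-- `X` is a cutset of `G`: deleting the vertices of `X` disconnects `G`. -/
def SimpleGraph.IsCutset {V : Type*} (G : SimpleGraph V) (X : Set V) : Prop :=
  ¬ (G.induce (Xᶜ : Set V)).Connected

/-- `G` is 3-connected: more than 3 vertices, and deleting any at most 2 vertices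
leaves a connected graph. -/
def SimpleGraph.ThreeConnected {V : Type*} [Fintype V] (G : SimpleGraph V) : Prop :=
  3 < Fintype.card V ∧ ∀ X : Set V, X.ncard ≤ 2 → (G.induce (Xᶜ : Set V)).Connected

namespace StmtAux
variable {V : Type*} {G : SimpleGraph V}

variable {V : Type*} {G : SimpleGraph V}




/-- properness of a 3-coloring function on a set -/
def ProperOn (G : SimpleGraph V) (f : V → Fin 3) (S : Set V) : Prop :=
  ∀ ⦃a⦄, a ∈ S → ∀ ⦃b⦄, b ∈ S → G.Adj a b → f a ≠ f b

lemma not_col3 (hχ : G.chromaticNumber = 4) : ¬ G.Colorable 3 := by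
  intro h
  have := h.chromaticNumber_le
  rw [hχ] at this
  norm_num at this

lemma col3_of_proper (f : V → Fin 3) (hf : ProperOn G f Set.univ) : G.Colorable 3 := by
  exact ⟨⟨f, fun {a b} hab => hf (Set.mem_univ a) (Set.mem_univ b) hab⟩⟩

lemma card_big [Fintype V] (hχ : G.chromaticNumber = 4) : 3 < Fintype.card V := by
  by_contra h
  push_neg at h
  exact not_col3 hχ ((G.colorable_of_fintype).mono h)

lemma sub_col (hsub : ∀ H : G.Subgraph, H ≠ ⊤ → H.coe.Colorable 3)
    (S : Set V) (hS : S ≠ Set.univ) : ∃ f : V → Fin 3, ProperOn G f S := by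
  classical
  set H : G.Subgraph := (⊤ : G.Subgraph).induce S with hH
  have hne : H ≠ ⊤ := by
    intro h
    apply hS
    have : H.verts = (⊤ : G.Subgraph).verts := by rw [h]
    simpa [hH, Subgraph.induce_verts] using this
  obtain ⟨C⟩ := hsub H hne
  refine ⟨fun w => if hw : w ∈ S then C ⟨w, hw⟩ else 0, ?_⟩
  intro a ha b hb hab
  have : H.coe.Adj ⟨a, ha⟩ ⟨b, hb⟩ := by
    simp only [hH, Subgraph.coe_adj, Subgraph.induce_adj, Subgraph.top_adj]
    exact ⟨ha, hb, hab⟩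
  have := C.valid this
  simpa [ha, hb] using this

lemma perm_match (fu fv gu gv : Fin 3) (h : gu = gv ↔ fu = fv) :
    ∃ σ : Equiv.Perm (Fin 3), σ gu = fu ∧ σ gv = fv := by
  by_cases hg : gu = gv
  · refine ⟨Equiv.swap gu fu, by simp, ?_⟩
    rw [← hg, Equiv.swap_apply_left, h.mp hg]
  · have hf : fu ≠ fv := fun hff => hg (h.mpr hff)
    set s1 := Equiv.swap gu fu with hs1
    have key : s1 gv ≠ fu := by
      intro hk
      have : s1 gv = s1 gu := by rw [hk, hs1, Equiv.swap_apply_left]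
      exact hg (s1.injective this).symm
    refine ⟨s1.trans (Equiv.swap (s1 gv) fv), ?_, ?_⟩
    · simp only [Equiv.trans_apply, hs1, Equiv.swap_apply_left]
      rw [← hs1]
      exact Equiv.swap_apply_of_ne_of_ne key.symm hf
    · simp only [Equiv.trans_apply, Equiv.swap_apply_left]

/-- gluing two partial colorings along X with a matching permutation -/
lemma glue (A B X : Set V) (f g : V → Fin 3) (σ : Equiv.Perm (Fin 3))
    (hcover : A ∪ B ∪ X = Set.univ)
    (hf : ProperOn G f (A ∪ X)) (hg : ProperOn G g (B ∪ X))
    (hmatch : ∀ x ∈ X, σ (g x) = f x)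
    (hAB : ∀ a ∈ A, ∀ b ∈ B, ¬ G.Adj a b) :
    G.Colorable 3 := by
  classical
  refine col3_of_proper (G := G) (fun w => if w ∈ B then σ (g w) else f w) ?_
  intro a _ b _ hab
  have hmem : ∀ w : V, w ∈ A ∪ B ∪ X := fun w => hcover ▸ Set.mem_univ w
  by_cases haB : a ∈ B <;> by_cases hbB : b ∈ B <;> simp only [haB, hbB, if_pos, if_neg,
    if_true, if_false]
  · -- both in B
    intro hEq
    exact hg (Or.inl haB) (Or.inl hbB) hab (σ.injective hEq)
  · -- a ∈ B, b ∉ B : b ∈ A ∪ X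
    have hb' : b ∈ A ∪ X := by
      rcases hmem b with (hb | hb) | hb
      · exact Or.inl hb
      · exact absurd hb hbB
      · exact Or.inr hb
    rcases hb' with hbA | hbX
    · exact absurd hab.symm (hAB b hbA a haB)
    · rw [← hmatch b hbX]
      intro hEq
      exact hg (Or.inl haB) (Or.inr hbX) hab (σ.injective hEq)
  · -- a ∉ B, b ∈ B
    have ha' : a ∈ A ∪ X := by
      rcases hmem a with (ha | ha) | ha
      · exact Or.inl ha
      · exact absurd ha haB
      · exact Or.inr ha
    rcases ha' with haA | haX
    · exact absurd hab (hAB a haA b hbB)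
    · rw [← hmatch a haX]
      intro hEq
      exact hg (Or.inr haX) (Or.inl hbB) hab (σ.injective hEq)
  · -- both not in B
    have ha' : a ∈ A ∪ X := by
      rcases hmem a with (ha | ha) | ha
      · exact Or.inl ha
      · exact absurd ha haB
      · exact Or.inr ha
    have hb' : b ∈ A ∪ X := by
      rcases hmem b with (hb | hb) | hb
      · exact Or.inl hb
      · exact absurd hb hbB
      · exact Or.inr hb
    exact hf ha' hb' hab




lemma walk_of_rtg {T : Set V} {z : V} {x : V} (hx : x ∈ T)
    (h : Relation.ReflTransGen (fun a b => G.Adj a b ∧ b ∈ T) x z) :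
    ∃ w : G.Walk x z, ∀ y ∈ w.support, y ∈ T := by
  induction h using Relation.ReflTransGen.head_induction_on with
  | refl => exact ⟨Walk.nil, by simpa using hx⟩
  | head hab _ ih =>
    obtain ⟨w, hw⟩ := ih hab.2
    exact ⟨Walk.cons hab.1 w, by
      intro y hy
      rw [Walk.support_cons, List.mem_cons] at hy
      rcases hy with rfl | hy'
      · exact hx
      · exact hw y hy'⟩

lemma edge_of_length_one {x y : V} (w : G.Walk x y) (h : w.length = 1) :
    s(x, y) ∈ w.edges := by
  cases w with
  | nil => simp at h
  | cons hadj q =>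
    have : q.length = 0 := by simpa using h
    have := q.eq_of_length_eq_zero this
    subst this
    simp

lemma shorter_of_chord [DecidableEq V] {u v x y : V} (p : G.Walk u v)
    (hadj : G.Adj x y) (hx : x ∈ p.support) (hy : y ∈ (p.dropUntil x hx).support)
    (hns : ¬ p.toSubgraph.Adj x y) :
    ∃ q : G.Walk u v, q.length < p.length ∧ ∀ z ∈ q.support, z ∈ p.support := by
  set t := p.takeUntil x hx with ht
  set d := p.dropUntil x hx with hd
  have hsplit : t.append d = p := p.take_spec hx
  have hlenp : t.length + d.length = p.length := by
    rw [← hsplit, Walk.length_append]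
  set dt := d.takeUntil y hy with hdt
  set dd := d.dropUntil y hy with hdd
  have hsplit2 : dt.append dd = d := d.take_spec hy
  have hlend : dt.length + dd.length = d.length := by
    rw [← hsplit2, Walk.length_append]
  have h2 : 2 ≤ dt.length := by
    rcases Nat.lt_or_ge dt.length 2 with h' | h'
    · interval_cases hdl : dt.length
      · exact absurd (dt.eq_of_length_eq_zero hdl) hadj.ne
      · exfalso
        apply hns
        rw [← Subgraph.mem_edgeSet, Walk.mem_edges_toSubgraph]
        exact (p.edges_dropUntil_subset hx) ((d.edges_takeUntil_subset hy)
          (edge_of_length_one dt hdl))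
    · exact h'
  refine ⟨t.append (Walk.cons hadj dd), ?_, ?_⟩
  · rw [Walk.length_append, Walk.length_cons]
    omega
  · intro z hz
    rw [Walk.mem_support_append_iff] at hz
    rcases hz with hz | hz
    · exact (p.support_takeUntil_subset hx) hz
    · rw [Walk.support_cons, List.mem_cons] at hz
      rcases hz with rfl | hz'
      · exact hx
      · exact (p.support_dropUntil_subset hx) ((d.support_dropUntil_subset hy) hz')

lemma mem_dropUntil_or [DecidableEq V] {u v : V} (p : G.Walk u v) :
    ∀ {x y : V} (hx : x ∈ p.support) (hy : y ∈ p.support), x ≠ y →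
    y ∈ (p.dropUntil x hx).support ∨ x ∈ (p.dropUntil y hy).support := by
  induction p with
  | nil =>
    intro x y hx hy hxy
    rw [Walk.mem_support_nil_iff] at hx hy
    exact absurd (hx.trans hy.symm) hxy
  | @cons a b c h q ih =>
    intro x y hx hy hxy
    by_cases hxa : a = x
    · rcases hxa with rfl
      left
      have e : (Walk.cons h q).dropUntil a hx = Walk.cons h q := by
        simp only [Walk.dropUntil, dif_pos]
      rw [e]
      exact hy
    · by_cases hya : a = y
      · rcases hya with rfl
        right
        have e : (Walk.cons h q).dropUntil a hy = Walk.cons h q := by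
          simp only [Walk.dropUntil, dif_pos]
        rw [e]
        exact hx
      · have hx' : x ∈ q.support := by
          rw [Walk.support_cons, List.mem_cons] at hx
          rcases hx with rfl | h'
          · exact absurd rfl hxa
          · exact h'
        have hy' : y ∈ q.support := by
          rw [Walk.support_cons, List.mem_cons] at hy
          rcases hy with rfl | h'
          · exact absurd rfl hya
          · exact h'
        have e1 : (Walk.cons h q).dropUntil x hx = q.dropUntil x hx' := by
          simp only [Walk.dropUntil, dif_neg hxa]
        have e2 : (Walk.cons h q).dropUntil y hy = q.dropUntil y hy' := by
          simp only [Walk.dropUntil, dif_neg hya]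
        rw [e1, e2]
        exact ih hx' hy' hxy

lemma extract_induced (D : Set V) {u v : V} (w : G.Walk u v)
    (hw : ∀ z ∈ w.support, z ∈ D) :
    ∃ p : G.Walk u v, p.IsPath ∧ (∀ z ∈ p.support, z ∈ D) ∧
      ∀ x y, x ∈ p.support → y ∈ p.support → G.Adj x y → p.toSubgraph.Adj x y := by
  classical
  suffices H : ∀ n (w' : G.Walk u v), w'.length ≤ n → (∀ z ∈ w'.support, z ∈ D) →
      ∃ p : G.Walk u v, p.IsPath ∧ (∀ z ∈ p.support, z ∈ D) ∧
      ∀ x y, x ∈ p.support → y ∈ p.support → G.Adj x y → p.toSubgraph.Adj x y by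
    exact H w.length w le_rfl hw
  intro n
  induction n using Nat.strong_induction_on with
  | _ n ih =>
    intro w' hlen hsupp
    set p := w'.bypass with hp
    have hpath : p.IsPath := w'.bypass_isPath
    have hd : ∀ z ∈ p.support, z ∈ D := fun z hz => hsupp z (w'.support_bypass_subset hz)
    by_cases hind : ∀ x y, x ∈ p.support → y ∈ p.support → G.Adj x y → p.toSubgraph.Adj x y
    · exact ⟨p, hpath, hd, hind⟩
    · push_neg at hind
      obtain ⟨x, y, hx, hy, hadj, hns⟩ := hind
      have hq : ∃ q : G.Walk u v, q.length < p.length ∧ ∀ z ∈ q.support, z ∈ p.support := by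
        rcases mem_dropUntil_or p hx hy hadj.ne with hcase | hcase
        · exact shorter_of_chord p hadj hx hcase hns
        · exact shorter_of_chord p hadj.symm hy hcase
            (fun hc => hns (hc.symm))
      obtain ⟨q, hqlen, hqsupp⟩ := hq
      have hplen : p.length ≤ n := le_trans (w'.length_bypass_le) hlen
      have hqn : q.length < n := lt_of_lt_of_le hqlen hplen
      exact ih q.length hqn q le_rfl (fun z hz => hd z (hqsupp z hz))





lemma parity_walk {T : Set V} {f : V → Fin 3} {α β : Fin 3}
    (hprop : ProperOn G f T)
    (hcol : ∀ z ∈ T, f z = α ∨ f z = β) :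
    ∀ {a b : V} (t : G.Walk a b), (∀ z ∈ t.support, z ∈ T) →
      (Even t.length ↔ f a = f b) := by
  intro a b t
  induction t with
  | nil => intro _; simp
  | @cons a c b h t ih =>
    intro hsupp
    have ha : a ∈ T := hsupp a (by simp)
    have hc : c ∈ T := hsupp c (by simp)
    have hb : b ∈ T := hsupp b (by simp)
    have hne : f a ≠ f c := hprop ha hc h
    have iha : Even t.length ↔ f c = f b := ih (fun z hz => hsupp z (by simp [hz]))
    rw [Walk.length_cons, Nat.even_add_one, iha]
    rcases hcol a ha with h1 | h1 <;> rcases hcol c hc with h2 | h2 <;>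
      rcases hcol b hb with h3 | h3 <;> simp_all <;> exact fun hh => hne hh.symm

lemma kempe_swap {A U : Set V} [DecidablePred (· ∈ U)] {f : V → Fin 3} {c d : Fin 3}
    (hprop : ProperOn G f A)
    (hU : ∀ a ∈ U, a ∈ A ∧ (f a = c ∨ f a = d))
    (hclosed : ∀ a ∈ U, ∀ b ∈ A, G.Adj a b → (f b = c ∨ f b = d) → b ∈ U) :
    ProperOn G (fun w => if w ∈ U then Equiv.swap c d (f w) else f w) A := by
  intro a ha b hb hadj
  by_cases haU : a ∈ U
  · by_cases hbU : b ∈ U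
    · simp only [if_pos haU, if_pos hbU]
      intro hEq
      exact hprop ha hb hadj ((Equiv.swap c d).injective hEq)
    · simp only [if_pos haU, if_neg hbU]
      have hfb : ¬ (f b = c ∨ f b = d) := fun hcd => hbU (hclosed a haU b hb hadj hcd)
      push_neg at hfb
      rcases (hU a haU).2 with h1 | h1 <;> rw [h1]
      · rw [Equiv.swap_apply_left]; exact fun h => hfb.2 h.symm
      · rw [Equiv.swap_apply_right]; exact fun h => hfb.1 h.symm
  · by_cases hbU : b ∈ U
    · simp only [if_neg haU, if_pos hbU]
      have hfa : ¬ (f a = c ∨ f a = d) := fun hcd => haU (hclosed b hbU a ha hadj.symm hcd)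
      push_neg at hfa
      rcases (hU b hbU).2 with h1 | h1 <;> rw [h1]
      · rw [Equiv.swap_apply_left]; exact fun h => hfa.2 h
      · rw [Equiv.swap_apply_right]; exact fun h => hfa.1 h
    · simp only [if_neg haU, if_neg hbU]
      exact hprop ha hb hadj

lemma no_c4 (hg : G.egirth = (5 : ℕ)) {u v m₁ m₂ : V} (huv : u ≠ v) (hmm : m₁ ≠ m₂)
    (h1 : G.Adj u m₁) (h2 : G.Adj m₁ v) (h3 : G.Adj v m₂) (h4 : G.Adj m₂ u) : False := by
  have n1 : u ≠ m₁ := h1.ne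
  have n2 : m₁ ≠ v := h2.ne
  have n3 : v ≠ m₂ := h3.ne
  have n4 : m₂ ≠ u := h4.ne
  set w : G.Walk u u := Walk.cons h1 (Walk.cons h2 (Walk.cons h3 (Walk.cons h4 Walk.nil)))
    with hw
  have hcyc : w.IsCycle := by
    rw [Walk.isCycle_def, Walk.isTrail_def]
    refine ⟨?_, by simp [hw], ?_⟩
    · simp only [hw, Walk.edges_cons, Walk.edges_nil, List.nodup_cons, List.mem_cons,
        List.not_mem_nil, or_false, List.nodup_nil, and_true, Sym2.eq_iff]
      push_neg
      aesop
    · simp only [hw, Walk.support_cons, Walk.support_nil, List.tail_cons, List.nodup_cons,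
        List.mem_cons, List.not_mem_nil, or_false, List.nodup_nil, and_true,
        List.mem_singleton]
      push_neg
      aesop
  have hle := le_egirth.mp (le_of_eq hg.symm) u w hcyc
  have hlen : w.length = 4 := by simp [hw]
  rw [hlen] at hle
  norm_num at hle




lemma hasHole_of_paths {u v : V} {SA SB : Set V} (p : G.Walk u v) (q : G.Walk u v)
    (hp : p.IsPath) (hq : q.IsPath)
    (hpsupp : ∀ z ∈ p.support, z = u ∨ z = v ∨ z ∈ SA)
    (hqsupp : ∀ z ∈ q.support, z = u ∨ z = v ∨ z ∈ SB)
    (hpind : ∀ x y, x ∈ p.support → y ∈ p.support → G.Adj x y → p.toSubgraph.Adj x y)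
    (hqind : ∀ x y, x ∈ q.support → y ∈ q.support → G.Adj x y → q.toSubgraph.Adj x y)
    (hdisj : ∀ a ∈ SA, a ∉ SB)
    (hAB : ∀ a ∈ SA, ∀ b ∈ SB, ¬ G.Adj a b)
    (huSA : u ∉ SA) (huSB : u ∉ SB) (hvSA : v ∉ SA) (hvSB : v ∉ SB)
    (huv : u ≠ v) (hnadj : ¬ G.Adj u v)
    (hlen : 4 ≤ p.length + q.length) :
    G.HasHole (p.length + q.length) := by
  -- intersection of supports is contained in {u, v}
  have hint : ∀ z, z ∈ p.support → z ∈ q.support → z = u ∨ z = v := by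
    intro z hzp hzq
    rcases hpsupp z hzp with rfl | rfl | hzA
    · exact Or.inl rfl
    · exact Or.inr rfl
    · rcases hqsupp z hzq with rfl | rfl | hzB
      · exact Or.inl rfl
      · exact Or.inr rfl
      · exact absurd hzB (hdisj z hzA)
  set c : G.Walk u u := p.append q.reverse with hc
  have hcsupp : ∀ z, z ∈ c.support ↔ (z ∈ p.support ∨ z ∈ q.support) := by
    intro z
    rw [hc, Walk.mem_support_append_iff]
    constructor
    · rintro (h | h)
      · exact Or.inl h
      · right; rw [Walk.support_reverse] at h; exact List.mem_reverse.mp h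
    · rintro (h | h)
      · exact Or.inl h
      · right; rw [Walk.support_reverse]; exact List.mem_reverse.mpr h
  have hcyc : c.IsCycle := by
    rw [Walk.isCycle_def]
    refine ⟨?_, ?_, ?_⟩
    · -- trail: edges nodup
      rw [Walk.isTrail_def, hc, Walk.edges_append]
      apply List.Nodup.append hp.isTrail.edges_nodup hq.reverse.isTrail.edges_nodup
      intro e hep heq
      rw [Walk.edges_reverse, List.mem_reverse] at heq
      induction e using Sym2.ind with
      | _ x y =>
        have hadj : G.Adj x y := p.adj_of_mem_edges hep
        have hxp : x ∈ p.support := p.fst_mem_support_of_mem_edges hep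
        have hyp : y ∈ p.support := p.snd_mem_support_of_mem_edges hep
        have hxq : x ∈ q.support := q.fst_mem_support_of_mem_edges heq
        have hyq : y ∈ q.support := q.snd_mem_support_of_mem_edges heq
        rcases hint x hxp hxq with rfl | rfl <;> rcases hint y hyp hyq with rfl | rfl
        · exact hadj.ne rfl
        · exact hnadj hadj
        · exact hnadj hadj.symm
        · exact hadj.ne rfl
    · -- c ≠ nil
      intro hnil
      have := congrArg Walk.length hnil
      rw [hc, Walk.length_append, Walk.length_reverse] at this
      simp only [Walk.length_nil] at this
      omega
    · -- support tail nodup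
      rw [hc, Walk.support_append, List.tail_append_of_ne_nil (Walk.support_ne_nil p)]
      apply List.Nodup.append (hp.support_nodup.sublist (List.tail_sublist _))
        (hq.reverse.support_nodup.sublist (List.tail_sublist _))
      intro z hzp hzq
      have hzp' : z ∈ p.support := List.mem_of_mem_tail hzp
      have hzq' : z ∈ q.support := by
        have := List.mem_of_mem_tail hzq
        rw [Walk.support_reverse, List.mem_reverse] at this
        exact this
      rcases hint z hzp' hzq' with rfl | rfl
      · -- z = u : but u not in p.support.tail
        have hnd := hp.support_nodup
        rw [p.support_eq_cons] at hnd
        exact (List.nodup_cons.mp hnd).1 hzp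
      · -- z = v : v not in q.reverse.support.tail
        have hnd := hq.reverse.support_nodup
        rw [q.reverse.support_eq_cons] at hnd
        exact (List.nodup_cons.mp hnd).1 hzq
  have hind : c.toSubgraph.IsInduced := by
    intro x hx y hy hadj
    rw [Walk.mem_verts_toSubgraph, hcsupp] at hx hy
    have hsub : ∀ {a b : V}, p.toSubgraph.Adj a b ∨ q.toSubgraph.Adj a b →
        c.toSubgraph.Adj a b := by
      rintro a b (h | h)
      · rw [hc, Walk.toSubgraph_append]
        exact Subgraph.sup_adj.mpr (Or.inl h)
      · rw [hc, Walk.toSubgraph_append]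
        refine Subgraph.sup_adj.mpr (Or.inr ?_)
        rwa [Walk.toSubgraph_reverse]
    -- reduce to: x,y both in p.support, or both in q.support
    have hboth : (x ∈ p.support ∧ y ∈ p.support) ∨ (x ∈ q.support ∧ y ∈ q.support) := by
      have hu_p : u ∈ p.support := p.start_mem_support
      have hv_p : v ∈ p.support := p.end_mem_support
      have hu_q : u ∈ q.support := q.start_mem_support
      have hv_q : v ∈ q.support := q.end_mem_support
      rcases hx with hxp | hxq <;> rcases hy with hyp | hyq
      · exact Or.inl ⟨hxp, hyp⟩
      · -- x in p, y in q
        rcases hpsupp x hxp with rfl | rfl | hxA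
        · exact Or.inr ⟨hu_q, hyq⟩
        · exact Or.inr ⟨hv_q, hyq⟩
        · rcases hqsupp y hyq with rfl | rfl | hyB
          · exact Or.inl ⟨hxp, hu_p⟩
          · exact Or.inl ⟨hxp, hv_p⟩
          · exact absurd hadj (hAB x hxA y hyB)
      · -- x in q, y in p
        rcases hpsupp y hyp with rfl | rfl | hyA
        · exact Or.inr ⟨hxq, hu_q⟩
        · exact Or.inr ⟨hxq, hv_q⟩
        · rcases hqsupp x hxq with rfl | rfl | hxB
          · exact Or.inl ⟨hu_p, hyp⟩
          · exact Or.inl ⟨hv_p, hyp⟩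
          · exact absurd hadj.symm (hAB y hyA x hxB)
      · exact Or.inr ⟨hxq, hyq⟩
    rcases hboth with ⟨h1, h2⟩ | ⟨h1, h2⟩
    · exact hsub (Or.inl (hpind x y h1 h2 hadj))
    · exact hsub (Or.inr (hqind x y h1 h2 hadj))
  refine ⟨hlen, u, c, hcyc, hind, ?_⟩
  rw [hc, Walk.length_append, Walk.length_reverse]



variable {V : Type*} {G : SimpleGraph V}

lemma properOn_mono {f : V → Fin 3} {S S' : Set V} (h : S' ⊆ S)
    (hf : ProperOn G f S) : ProperOn G f S' :=
  fun _ ha _ hb hadj => hf (h ha) (h hb) hadj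

lemma other_colors : ∀ c : Fin 3, ∃ d e : Fin 3, d ≠ c ∧ e ≠ c ∧ d ≠ e := by decide

/-- From an alternating chain linking a neighbour of `u` to a neighbour of `v`,
produce an induced `u,v`-path with controlled parity. -/
lemma chain_path {u v x z : V} {T : Set V} {f : V → Fin 3} {α γ δ₁ δ₂ : Fin 3}
    (huv : u ≠ v) (hnadj : ¬ G.Adj u v) (hTu : u ∉ T) (hTv : v ∉ T)
    (hpropT : ProperOn G f T) (hcolT : ∀ y ∈ T, f y = δ₁ ∨ f y = δ₂)
    (hfu : ∀ w ∈ T, G.Adj u w → f w = α) (hfv : ∀ w ∈ T, G.Adj v w → f w = γ)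
    (hxT : x ∈ T) (hux : G.Adj u x)
    (hzv : G.Adj z v)
    (hrtg : Relation.ReflTransGen (fun a b => G.Adj a b ∧ b ∈ T) x z) :
    ∃ p : G.Walk u v, p.IsPath ∧ (∀ y ∈ p.support, y = u ∨ y = v ∨ y ∈ T) ∧
      (∀ x' y', x' ∈ p.support → y' ∈ p.support → G.Adj x' y' → p.toSubgraph.Adj x' y') ∧
      2 ≤ p.length ∧ (Even p.length ↔ α = γ) ∧
      (p.length = 2 → ∃ m, G.Adj u m ∧ G.Adj m v ∧ m ∈ T ∧ f m = α ∧ f m = γ) := by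
  classical
  obtain ⟨w1, hw1⟩ := walk_of_rtg hxT hrtg
  set w : G.Walk u v := Walk.cons hux (w1.concat hzv) with hwdef
  have hconcat_supp : (w1.concat hzv).support = w1.support ++ [v] := by
    rw [Walk.concat, Walk.support_append]
    simp
  have hwsupp : ∀ y ∈ w.support, y ∈ insert u (insert v T) := by
    intro y hy
    rw [hwdef, Walk.support_cons, List.mem_cons] at hy
    rcases hy with rfl | hy
    · exact Set.mem_insert _ _
    · rw [hconcat_supp, List.mem_append] at hy
      rcases hy with hy | hy
      · exact Set.mem_insert_of_mem _ (Set.mem_insert_of_mem _ (hw1 y hy))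
      · rw [List.mem_singleton] at hy
        exact hy ▸ Set.mem_insert_of_mem _ (Set.mem_insert _ _)
  obtain ⟨p, hpath, hpsupp, hpind⟩ := extract_induced (insert u (insert v T)) w hwsupp
  have hsupp3 : ∀ y ∈ p.support, y = u ∨ y = v ∨ y ∈ T := by
    intro y hy
    rcases hpsupp y hy with rfl | hy' 
    · exact Or.inl rfl
    · rcases hy' with rfl | hy''
      · exact Or.inr (Or.inl rfl)
      · exact Or.inr (Or.inr hy'')
  -- decompose p
  cases p with
  | nil => exact absurd rfl huv
  | @cons _ w₁ _ h₁ r =>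
    have hw₁mem : w₁ ∈ (Walk.cons h₁ r).support := by simp
    have hw₁T : w₁ ∈ T := by
      rcases hsupp3 w₁ hw₁mem with rfl | rfl | h'
      · exact absurd h₁ G.irrefl
      · exact absurd h₁ hnadj
      · exact h'
    have hfw₁ : f w₁ = α := hfu w₁ hw₁T h₁
    have hrpath : r.IsPath := hpath.of_cons
    have hrrev : r.reverse.IsPath := hrpath.reverse
    cases hrr : r.reverse with
    | nil =>
      exfalso
      have : r.length = 0 := by
        have := congrArg Walk.length hrr
        rwa [Walk.length_reverse, Walk.length_nil] at this
      exact hTv (r.eq_of_length_eq_zero this ▸ hw₁T)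
    | @cons _ w₂ _ h₂ t =>
      have hw₂r : w₂ ∈ r.support := by
        have : w₂ ∈ r.reverse.support := by rw [hrr]; simp
        rwa [Walk.support_reverse, List.mem_reverse] at this
      have hw₂p : w₂ ∈ (Walk.cons h₁ r).support := by
        rw [Walk.support_cons, List.mem_cons]; exact Or.inr hw₂r
      have hw₂T : w₂ ∈ T := by
        rcases hsupp3 w₂ hw₂p with rfl | rfl | h'
        · exact absurd h₂.symm hnadj
        · exact absurd h₂ G.irrefl
        · exact h'
      have hfw₂ : f w₂ = γ := hfv w₂ hw₂T h₂
      -- t.support ⊆ T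
      have htsupp : ∀ y ∈ t.support, y ∈ T := by
        intro y hy
        have hyr : y ∈ r.support := by
          have : y ∈ r.reverse.support := by rw [hrr, Walk.support_cons]; exact List.mem_cons_of_mem _ hy
          rwa [Walk.support_reverse, List.mem_reverse] at this
        have hyp : y ∈ (Walk.cons h₁ r).support := by
          rw [Walk.support_cons, List.mem_cons]; exact Or.inr hyr
        rcases hsupp3 y hyp with rfl | rfl | h'
        · -- y = u : but u ∉ r.support by path-nodup
          exfalso
          have hnd := hpath.support_nodup
          rw [Walk.support_cons, List.nodup_cons] at hnd
          exact hnd.1 hyr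
        · -- y = v : v ∉ t.support since r.reverse = cons h₂ t is a path starting at v
          exfalso
          have hnd := hrrev.support_nodup
          rw [hrr, Walk.support_cons, List.nodup_cons] at hnd
          exact hnd.1 hy
        · exact h'
      have hpar := parity_walk (α := δ₁) (β := δ₂) hpropT hcolT t htsupp
      rw [hfw₂, hfw₁] at hpar
      have hlenr : r.length = t.length + 1 := by
        have := congrArg Walk.length hrr
        rwa [Walk.length_reverse, Walk.length_cons] at this
      have hlenp : (Walk.cons h₁ r).length = t.length + 2 := by
        rw [Walk.length_cons, hlenr]
      refine ⟨Walk.cons h₁ r, hpath, hsupp3, hpind, ?_, ?_, ?_⟩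
      · omega
      · rw [hlenp]
        constructor
        · intro he
          have : Even t.length := by
            rcases he with ⟨k, hk⟩
            exact ⟨k - 1, by omega⟩
          exact (hpar.mp this).symm
        · intro hag
          have : Even t.length := hpar.mpr hag.symm
          rcases this with ⟨k, hk⟩
          exact ⟨k + 1, by omega⟩
      · intro h2len
        have ht0 : t.length = 0 := by omega
        have heq : w₂ = w₁ := t.eq_of_length_eq_zero ht0
        refine ⟨w₁, h₁, ?_, hw₁T, hfw₁, ?_⟩
        · exact (show G.Adj v w₁ by rw [← heq]; exact h₂).symm
        · rw [← heq]; exact hfw₂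


variable {V : Type*} {G : SimpleGraph V}

lemma core {u v : V} {A B : Set V}
    (hg : G.egirth = (5 : ℕ))
    (hnohole : ∀ n : ℕ, Odd n → 7 ≤ n → ¬ G.HasHole n)
    (huv : u ≠ v)
    (hAu : u ∉ A) (hAv : v ∉ A) (hBu : u ∉ B) (hBv : v ∉ B)
    (hABdisj : ∀ a ∈ A, a ∉ B)
    (hABedge : ∀ a ∈ A, ∀ b ∈ B, ¬ G.Adj a b)
    (f₁ g₁ : V → Fin 3)
    (hf₁ : ProperOn G f₁ (insert u (insert v A)))
    (hg₁ : ProperOn G g₁ (insert u (insert v B)))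
    (hsame : ∀ f : V → Fin 3, ProperOn G f (insert u (insert v A)) → f u = f v)
    (hdiff : ∀ g : V → Fin 3, ProperOn G g (insert u (insert v B)) → g u ≠ g v) :
    False := by
  classical
  have humemA : u ∈ insert u (insert v A) := Set.mem_insert _ _
  have hvmemA : v ∈ insert u (insert v A) := Set.mem_insert_of_mem _ (Set.mem_insert _ _)
  have humemB : u ∈ insert u (insert v B) := Set.mem_insert _ _
  have hvmemB : v ∈ insert u (insert v B) := Set.mem_insert_of_mem _ (Set.mem_insert _ _)
  have hnadj : ¬ G.Adj u v := fun h => hf₁ humemA hvmemA h (hsame f₁ hf₁)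
  have hsubA : A ⊆ insert u (insert v A) :=
    fun x hx => Set.mem_insert_of_mem _ (Set.mem_insert_of_mem _ hx)
  have hsubB : B ⊆ insert u (insert v B) :=
    fun x hx => Set.mem_insert_of_mem _ (Set.mem_insert_of_mem _ hx)
  have hpropA : ProperOn G f₁ A := properOn_mono hsubA hf₁
  have hpropB : ProperOn G g₁ B := properOn_mono hsubB hg₁
  -- D2 : no colour can be simultaneously free for u and v on the B side
  have d2 : ∀ φ : V → Fin 3, ProperOn G φ B → ∀ γ : Fin 3,
      (∀ b ∈ B, G.Adj u b → φ b ≠ γ) → (∀ b ∈ B, G.Adj v b → φ b ≠ γ) → False := by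
    intro φ hφ γ hu hv
    set g : V → Fin 3 := fun w => if w = u then γ else if w = v then γ else φ w with hgdef
    have hval : ∀ w ∈ B, g w = φ w := by
      intro w hw
      have h1 : w ≠ u := fun h => hBu (h ▸ hw)
      have h2 : w ≠ v := fun h => hBv (h ▸ hw)
      simp [hgdef, h1, h2]
    have hgu : g u = γ := by simp [hgdef]
    have hgv : g v = γ := by simp [hgdef, huv.symm]
    have hproper : ProperOn G g (insert u (insert v B)) := by
      intro a ha b hb hadj
      rcases Set.mem_insert_iff.mp ha with rfl | ha'
      · rcases Set.mem_insert_iff.mp hb with rfl | hb'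
        · exact absurd hadj G.irrefl
        · rcases Set.mem_insert_iff.mp hb' with rfl | hbB
          · exact absurd hadj hnadj
          · rw [hval b hbB, hgu]
            exact fun h => hu b hbB hadj h.symm
      · rcases Set.mem_insert_iff.mp ha' with rfl | haB
        · rcases Set.mem_insert_iff.mp hb with rfl | hb'
          · exact absurd hadj.symm hnadj
          · rcases Set.mem_insert_iff.mp hb' with rfl | hbB
            · exact absurd hadj G.irrefl
            · rw [hval b hbB, hgv]
              exact fun h => hv b hbB hadj h.symm
        · rw [hval a haB]
          rcases Set.mem_insert_iff.mp hb with rfl | hb'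
          · rw [hgu]
            exact hu a haB hadj.symm
          · rcases Set.mem_insert_iff.mp hb' with rfl | hbB
            · rw [hgv]
              exact hv a haB hadj.symm
            · rw [hval b hbB]
              exact hφ haB hbB hadj
    exact hdiff g hproper (hgu.trans hgv.symm)
  -- D1 : any colour free for u and any colour free for v on the A side coincide
  have d1 : ∀ ψ : V → Fin 3, ProperOn G ψ A → ∀ cu cv : Fin 3,
      (∀ a ∈ A, G.Adj u a → ψ a ≠ cu) → (∀ a ∈ A, G.Adj v a → ψ a ≠ cv) → cu = cv := by
    intro ψ hψ cu cv hu hv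
    set fE : V → Fin 3 := fun w => if w = u then cu else if w = v then cv else ψ w with hfdef
    have hval : ∀ w ∈ A, fE w = ψ w := by
      intro w hw
      have h1 : w ≠ u := fun h => hAu (h ▸ hw)
      have h2 : w ≠ v := fun h => hAv (h ▸ hw)
      simp [hfdef, h1, h2]
    have hgu : fE u = cu := by simp [hfdef]
    have hgv : fE v = cv := by simp [hfdef, huv.symm]
    have hproper : ProperOn G fE (insert u (insert v A)) := by
      intro a ha b hb hadj
      rcases Set.mem_insert_iff.mp ha with rfl | ha'
      · rcases Set.mem_insert_iff.mp hb with rfl | hb'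
        · exact absurd hadj G.irrefl
        · rcases Set.mem_insert_iff.mp hb' with rfl | hbA
          · exact absurd hadj hnadj
          · rw [hval b hbA, hgu]
            exact fun h => hu b hbA hadj h.symm
      · rcases Set.mem_insert_iff.mp ha' with rfl | haA
        · rcases Set.mem_insert_iff.mp hb with rfl | hb'
          · exact absurd hadj.symm hnadj
          · rcases Set.mem_insert_iff.mp hb' with rfl | hbA
            · exact absurd hadj G.irrefl
            · rw [hval b hbA, hgv]
              exact fun h => hv b hbA hadj h.symm
        · rw [hval a haA]
          rcases Set.mem_insert_iff.mp hb with rfl | hb'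
          · rw [hgu]
            exact hu a haA hadj.symm
          · rcases Set.mem_insert_iff.mp hb' with rfl | hbA
            · rw [hgv]
              exact hv a haA hadj.symm
            · rw [hval b hbA]
              exact hψ haA hbA hadj
    have := hsame fE hproper
    rw [hgu, hgv] at this
    exact this
  ------------------------------------------------------------------
  -- B side : an induced u-v path of odd length through B
  ------------------------------------------------------------------
  set α := g₁ v with hαdef
  set β := g₁ u with hβdef
  have hαβ : β ≠ α := hdiff g₁ hg₁
  have hNuβ : ∀ b ∈ B, G.Adj u b → g₁ b ≠ β := fun b hb hadj =>
    hg₁ (hsubB hb) humemB hadj.symm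
  have hNvα : ∀ b ∈ B, G.Adj v b → g₁ b ≠ α := fun b hb hadj =>
    hg₁ (hsubB hb) hvmemB hadj.symm
  set T_B : Set V := {b | b ∈ B ∧ (g₁ b = α ∨ g₁ b = β)} with hTBdef
  set U_B : Set V := {b | b ∈ T_B ∧ ∃ x, (x ∈ B ∧ G.Adj u x ∧ g₁ x = α) ∧
      Relation.ReflTransGen (fun a b' => G.Adj a b' ∧ b' ∈ T_B) x b} with hUBdef
  haveI : DecidablePred (· ∈ U_B) := Classical.decPred _
  have hz : ∃ z, z ∈ B ∧ G.Adj v z ∧ g₁ z = β ∧ z ∈ U_B := by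
    by_contra hno
    push_neg at hno
    have hUsub : ∀ a ∈ U_B, a ∈ B ∧ (g₁ a = α ∨ g₁ a = β) := fun a ha => ha.1
    have hUclosed : ∀ a ∈ U_B, ∀ b ∈ B, G.Adj a b → (g₁ b = α ∨ g₁ b = β) → b ∈ U_B := by
      intro a ha b hb hadj hcol
      obtain ⟨x, hx, hr⟩ := ha.2
      exact ⟨⟨hb, hcol⟩, x, hx, hr.tail ⟨hadj, hb, hcol⟩⟩
    have hswap := kempe_swap (G := G) (A := B) (U := U_B) (c := α) (d := β)
      hpropB hUsub hUclosed
    apply d2 _ hswap α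
    · intro b hb hadj
      by_cases hbU : b ∈ U_B
      · have hbα : g₁ b = α := by
          rcases hbU.1.2 with h | h
          · exact h
          · exact absurd h (hNuβ b hb hadj)
        simp only [if_pos hbU, hbα, Equiv.swap_apply_left]
        exact hαβ
      · have hne : g₁ b ≠ α := by
          intro h
          exact hbU ⟨⟨hb, Or.inl h⟩, b, ⟨hb, hadj, h⟩, Relation.ReflTransGen.refl⟩
        simpa only [if_neg hbU] using hne
    · intro b hb hadj
      have hne : g₁ b ≠ α := hNvα b hb hadj
      by_cases hbU : b ∈ U_B
      · have hbβ : g₁ b = β := by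
          rcases hbU.1.2 with h | h
          · exact absurd h hne
          · exact h
        exact absurd hbU (hno b hb hadj hbβ)
      · simpa only [if_neg hbU] using hne
  obtain ⟨z, hzB, hvz, hzβ, hzU⟩ := hz
  obtain ⟨x, ⟨hxB, hux, hxα⟩, hrtg⟩ := hzU.2
  have hTBu : u ∉ T_B := fun h => hBu h.1
  have hTBv : v ∉ T_B := fun h => hBv h.1
  have hTBsub : T_B ⊆ B := fun y hy => hy.1
  have hpropTB : ProperOn G g₁ T_B := properOn_mono (fun y hy => hsubB (hTBsub hy)) hg₁
  obtain ⟨q, hqpath, hqsupp, hqind, hq2, hqpar, _⟩ :=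
    chain_path (G := G) (T := T_B) (f := g₁) (α := α) (γ := β)
      huv hnadj hTBu hTBv hpropTB (fun y hy => hy.2)
      (fun w hw hadj => by
        rcases hw.2 with h | h
        · exact h
        · exact absurd h (hNuβ w hw.1 hadj))
      (fun w hw hadj => by
        rcases hw.2 with h | h
        · exact absurd h (hNvα w hw.1 hadj)
        · exact h)
      ⟨hxB, Or.inl hxα⟩ hux hvz.symm hrtg
  have hqodd : ¬ Even q.length := fun he => hαβ (hqpar.mp he).symm
  have hq3 : 3 ≤ q.length := by
    rcases Nat.even_or_odd q.length with he | ho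
    · exact absurd he hqodd
    · rcases ho with ⟨k, hk⟩
      omega
  ------------------------------------------------------------------
  -- A side : for each colour c₁ ≠ f₁ u there is a common neighbour coloured c₁
  ------------------------------------------------------------------
  set cc := f₁ u with hccdef
  have hccv : f₁ v = cc := (hsame f₁ hf₁).symm
  have hNucc : ∀ a ∈ A, G.Adj u a → f₁ a ≠ cc := fun a ha hadj =>
    hf₁ (hsubA ha) humemA hadj.symm
  have hNvcc : ∀ a ∈ A, G.Adj v a → f₁ a ≠ cc := fun a ha hadj => by
    rw [← hccv]
    exact hf₁ (hsubA ha) hvmemA hadj.symm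
  have getm : ∀ c₁ : Fin 3, c₁ ≠ cc → ∃ m, G.Adj u m ∧ G.Adj m v ∧ f₁ m = c₁ := by
    intro c₁ hc₁
    have hseed : ∃ x', x' ∈ A ∧ G.Adj u x' ∧ f₁ x' = c₁ := by
      by_contra hno
      push_neg at hno
      exact hc₁ (d1 f₁ hpropA c₁ cc (fun a ha hadj => hno a ha hadj) hNvcc)
    set T_A : Set V := {a | a ∈ A ∧ (f₁ a = c₁ ∨ f₁ a = cc)} with hTAdef
    set U_A : Set V := {a | a ∈ T_A ∧ ∃ x', (x' ∈ A ∧ G.Adj u x' ∧ f₁ x' = c₁) ∧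
        Relation.ReflTransGen (fun a' b' => G.Adj a' b' ∧ b' ∈ T_A) x' a} with hUAdef
    haveI : DecidablePred (· ∈ U_A) := Classical.decPred _
    have hzA : ∃ z', z' ∈ A ∧ G.Adj v z' ∧ f₁ z' = c₁ ∧ z' ∈ U_A := by
      by_contra hno
      push_neg at hno
      have hUsub : ∀ a ∈ U_A, a ∈ A ∧ (f₁ a = c₁ ∨ f₁ a = cc) := fun a ha => ha.1
      have hUclosed : ∀ a ∈ U_A, ∀ b ∈ A, G.Adj a b → (f₁ b = c₁ ∨ f₁ b = cc) → b ∈ U_A := by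
        intro a ha b hb hadj hcol
        obtain ⟨x', hx', hr⟩ := ha.2
        exact ⟨⟨hb, hcol⟩, x', hx', hr.tail ⟨hadj, hb, hcol⟩⟩
      have hswap := kempe_swap (G := G) (A := A) (U := U_A) (c := c₁) (d := cc)
        hpropA hUsub hUclosed
      apply hc₁
      apply d1 _ hswap c₁ cc
      · intro a ha hadj
        by_cases haU : a ∈ U_A
        · have hac : f₁ a = c₁ := by
            rcases haU.1.2 with h | h
            · exact h
            · exact absurd h (hNucc a ha hadj)
          simp only [if_pos haU, hac, Equiv.swap_apply_left]
          exact fun h => hc₁ h.symm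
        · have hne : f₁ a ≠ c₁ := by
            intro h
            exact haU ⟨⟨ha, Or.inl h⟩, a, ⟨ha, hadj, h⟩, Relation.ReflTransGen.refl⟩
          simpa only [if_neg haU] using hne
      · intro a ha hadj
        have hne : f₁ a ≠ cc := hNvcc a ha hadj
        by_cases haU : a ∈ U_A
        · have hac : f₁ a = c₁ := by
            rcases haU.1.2 with h | h
            · exact h
            · exact absurd h hne
          exact absurd haU (hno a ha hadj hac)
        · simpa only [if_neg haU] using hne
    obtain ⟨z', hzA', hvz', hzc, hzU'⟩ := hzA
    obtain ⟨x', ⟨hxA', hux', hxc⟩, hrtg'⟩ := hzU'.2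
    have hTAu : u ∉ T_A := fun h => hAu h.1
    have hTAv : v ∉ T_A := fun h => hAv h.1
    have hTAsub : T_A ⊆ A := fun y hy => hy.1
    have hpropTA : ProperOn G f₁ T_A := properOn_mono (fun y hy => hsubA (hTAsub hy)) hf₁
    obtain ⟨p, hppath, hpsupp, hpind, hp2, hppar, hpm⟩ :=
      chain_path (G := G) (T := T_A) (f := f₁) (α := c₁) (γ := c₁)
        huv hnadj hTAu hTAv hpropTA (fun y hy => hy.2)
        (fun w hw hadj => by
          rcases hw.2 with h | h
          · exact h
          · exact absurd h (hNucc w hw.1 hadj))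
        (fun w hw hadj => by
          rcases hw.2 with h | h
          · exact h
          · exact absurd h (hNvcc w hw.1 hadj))
        ⟨hxA', Or.inl hxc⟩ hux' hvz'.symm hrtg'
    have hpeven : Even p.length := hppar.mpr rfl
    by_cases hplen2 : p.length = 2
    · obtain ⟨m, hum, hmv, _, hmc, _⟩ := hpm hplen2
      exact ⟨m, hum, hmv, hmc⟩
    · exfalso
      have hp4 : 4 ≤ p.length := by
        rcases hpeven with ⟨k, hk⟩
        omega
      have hole := hasHole_of_paths (G := G) (SA := T_A) (SB := T_B) p q hppath hqpath
        hpsupp hqsupp hpind hqind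
        (fun a ha hb => hABdisj a (hTAsub ha) (hTBsub hb))
        (fun a ha b hb => hABedge a (hTAsub ha) b (hTBsub hb))
        hTAu hTBu hTAv hTBv huv hnadj (by omega)
      apply hnohole (p.length + q.length) ?_ (by omega) hole
      have hqodd' : Odd q.length := Nat.odd_iff.mpr (by
        rcases Nat.even_or_odd q.length with he | ho
        · exact absurd he hqodd
        · exact Nat.odd_iff.mp ho)
      exact hpeven.add_odd hqodd'
  obtain ⟨c₁, c₂, h1cc, h2cc, h12⟩ := other_colors cc
  obtain ⟨m₁, hum₁, hm₁v, hm₁c⟩ := getm c₁ h1cc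
  obtain ⟨m₂, hum₂, hm₂v, hm₂c⟩ := getm c₂ h2cc
  have hmm : m₁ ≠ m₂ := fun h => h12 (by rw [← hm₁c, h, hm₂c])
  exact no_c4 hg huv hmm hum₁ hm₁v hm₂v.symm hum₂.symm


end StmtAux

/-- every graph `G ∈ 𝒢₀` is 3-connected. -/
theorem stmt_5 {V : Type*} [Fintype V] (G : SimpleGraph V) (hG : G.MemG0) :
    G.ThreeConnected := by
  classical
  obtain ⟨⟨hgirth, hnohole⟩, hχ, hsub⟩ := hG
  have hgirth5 : G.egirth = ((5 : ℕ) : ℕ∞) := by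
    rw [hgirth]
  have hnohole7 : ∀ n : ℕ, Odd n → 7 ≤ n → ¬ G.HasHole n :=
    fun n hn h7 => hnohole n hn (by omega)
  have hncol : ¬ G.Colorable 3 := StmtAux.not_col3 hχ
  refine ⟨StmtAux.card_big hχ, ?_⟩
  intro X hX
  by_contra hconn
  -- the complement of X is nonempty
  have hXfin : X.Finite := Set.toFinite X
  have hne : (Xᶜ : Set V).Nonempty := by
    rcases Set.eq_empty_or_nonempty (Xᶜ : Set V) with h | h
    · exfalso
      have hXuniv : X = Set.univ := by
        rw [← Set.compl_empty_iff]; exact h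
      rw [hXuniv, Set.ncard_univ, Nat.card_eq_fintype_card] at hX
      have := StmtAux.card_big hχ
      omega
    · exact h
  haveI hne' : Nonempty (Xᶜ : Set V) := hne.to_subtype
  have hpre : ¬ (G.induce (Xᶜ : Set V)).Preconnected := by
    intro hp
    exact hconn ⟨hp⟩
  rw [SimpleGraph.Preconnected] at hpre
  push_neg at hpre
  obtain ⟨x₀, y₀, hxy⟩ := hpre
  -- the two sides
  set A : Set V := {w | ∃ h : w ∈ (Xᶜ : Set V), (G.induce (Xᶜ : Set V)).Reachable x₀ ⟨w, h⟩}
    with hAdef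
  set B : Set V := {w | w ∈ (Xᶜ : Set V) ∧ w ∉ A} with hBdef
  have hx₀A : (x₀ : V) ∈ A := ⟨x₀.2, by
    have : (⟨(x₀ : V), x₀.2⟩ : (Xᶜ : Set V)) = x₀ := Subtype.ext rfl
    rw [this]⟩
  have hy₀B : (y₀ : V) ∈ B := by
    refine ⟨y₀.2, ?_⟩
    rintro ⟨h, hr⟩
    apply hxy
    have : (⟨(y₀ : V), h⟩ : (Xᶜ : Set V)) = y₀ := Subtype.ext rfl
    rwa [this] at hr
  have hAcompl : ∀ a ∈ A, a ∈ (Xᶜ : Set V) := fun a ha => ha.1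
  have hBcompl : ∀ b ∈ B, b ∈ (Xᶜ : Set V) := fun b hb => hb.1
  have hABdisj : ∀ a ∈ A, a ∉ B := fun a ha hb => hb.2 ha
  have hBAdisj : ∀ b ∈ B, b ∉ A := fun b hb => hb.2
  have hABedge : ∀ a ∈ A, ∀ b ∈ B, ¬ G.Adj a b := by
    intro a ha b hb hadj
    apply hb.2
    obtain ⟨haX, hr⟩ := ha
    have hadj' : (G.induce (Xᶜ : Set V)).Adj ⟨a, haX⟩ ⟨b, hb.1⟩ := hadj
    exact ⟨hb.1, hr.trans hadj'.reachable⟩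
  have hAX : ∀ a ∈ A, a ∉ X := fun a ha => ha.1
  have hBX : ∀ b ∈ B, b ∉ X := fun b hb => hb.1
  have hcover : A ∪ B ∪ X = Set.univ := by
    ext w
    simp only [Set.mem_union, Set.mem_univ, iff_true]
    by_cases hw : w ∈ X
    · exact Or.inr hw
    · by_cases hwA : w ∈ A
      · exact Or.inl (Or.inl hwA)
      · exact Or.inl (Or.inr ⟨hw, hwA⟩)
  -- colourings of the two sides
  have hAXne : A ∪ X ≠ Set.univ := by
    intro h
    have : (y₀ : V) ∈ A ∪ X := h ▸ Set.mem_univ _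
    rcases this with h' | h'
    · exact hy₀B.2 h'
    · exact hy₀B.1 h'
  have hBXne : B ∪ X ≠ Set.univ := by
    intro h
    have : (x₀ : V) ∈ B ∪ X := h ▸ Set.mem_univ _
    rcases this with h' | h'
    · exact h'.2 hx₀A
    · exact x₀.2 h'
  obtain ⟨f₁, hf₁⟩ := StmtAux.sub_col hsub (A ∪ X) hAXne
  obtain ⟨g₁, hg₁⟩ := StmtAux.sub_col hsub (B ∪ X) hBXne
  -- case on the size of X
  interval_cases hXc : X.ncard
  · -- X empty
    have hX0 : X = ∅ := (Set.ncard_eq_zero hXfin).mp hXc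
    apply hncol
    refine StmtAux.glue A B X f₁ g₁ (Equiv.refl _) hcover hf₁ hg₁ ?_ hABedge
    intro x hx
    rw [hX0] at hx
    exact absurd hx (Set.notMem_empty x)
  · -- X a singleton
    obtain ⟨a, hXa⟩ := (Set.ncard_eq_one).mp hXc
    apply hncol
    refine StmtAux.glue A B X f₁ g₁ (Equiv.swap (g₁ a) (f₁ a)) hcover hf₁ hg₁ ?_ hABedge
    intro x hx
    rw [hXa, Set.mem_singleton_iff] at hx
    subst hx
    exact Equiv.swap_apply_left _ _
  · -- X has two elements
    obtain ⟨a, b, hab, hXab⟩ := (Set.ncard_eq_two).mp hXc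
    have haX : a ∈ X := by rw [hXab]; exact Set.mem_insert _ _
    have hbX : b ∈ X := by rw [hXab]; exact Set.mem_insert_of_mem _ rfl
    by_cases hgood : ∃ f' g' : V → Fin 3, StmtAux.ProperOn G f' (A ∪ X) ∧
        StmtAux.ProperOn G g' (B ∪ X) ∧ ((g' a = g' b) ↔ (f' a = f' b))
    · obtain ⟨f', g', hf', hg', hiff⟩ := hgood
      obtain ⟨σ, hσa, hσb⟩ := StmtAux.perm_match (f' a) (f' b) (g' a) (g' b) hiff
      apply hncol
      refine StmtAux.glue A B X f' g' σ hcover hf' hg' ?_ hABedge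
      intro x hx
      rw [hXab] at hx
      rcases hx with rfl | hx
      · exact hσa
      · rw [Set.mem_singleton_iff] at hx
        subst hx
        exact hσb
    · push_neg at hgood
      have hpat : ∀ f' g' : V → Fin 3, StmtAux.ProperOn G f' (A ∪ X) →
          StmtAux.ProperOn G g' (B ∪ X) → ((g' a = g' b) ↔ (f' a = f' b)) → False := by
        intro f' g' h1 h2 hiff
        rcases hgood f' g' h1 h2 with ⟨h3, h4⟩ | ⟨h3, h4⟩
        · exact h4 (hiff.mp h3)
        · exact h3 (hiff.mpr h4)
      have hAins : A ∪ X = insert a (insert b A) := by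
        rw [hXab]
        ext w
        simp only [Set.mem_union, Set.mem_insert_iff, Set.mem_singleton_iff]
        tauto
      have hBins : B ∪ X = insert a (insert b B) := by
        rw [hXab]
        ext w
        simp only [Set.mem_union, Set.mem_insert_iff, Set.mem_singleton_iff]
        tauto
      have haA : a ∉ A := fun h => hAX a h haX
      have hbA : b ∉ A := fun h => hAX b h hbX
      have haB : a ∉ B := fun h => hBX a h haX
      have hbB : b ∉ B := fun h => hBX b h hbX
      have hf₁' := hf₁
      have hg₁' := hg₁
      rw [hAins] at hf₁
      rw [hBins] at hg₁
      by_cases hfp : f₁ a = f₁ b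
      · -- every A-side colouring is "same", every B-side colouring is "diff"
        have hdiff : ∀ g : V → Fin 3, StmtAux.ProperOn G g (insert a (insert b B)) →
            g a ≠ g b := by
          intro g hg hgp
          exact hpat f₁ g hf₁' (hBins ▸ hg) (by tauto)
        have hsame : ∀ f : V → Fin 3, StmtAux.ProperOn G f (insert a (insert b A)) →
            f a = f b := by
          intro f hf
          by_contra hfd
          have hgd : g₁ a ≠ g₁ b := hdiff g₁ hg₁
          exact hpat f g₁ (hAins ▸ hf) hg₁' (by tauto)
        exact StmtAux.core hgirth5 hnohole7 hab haA hbA haB hbB hABdisj hABedge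
          f₁ g₁ hf₁ hg₁ hsame hdiff
      · -- every A-side colouring is "diff", every B-side colouring is "same"
        have hsame : ∀ f : V → Fin 3, StmtAux.ProperOn G f (insert a (insert b B)) →
            f a = f b := by
          intro f hf
          by_contra hfd
          exact hpat f₁ f hf₁' (hBins ▸ hf) (by tauto)
        have hdiff : ∀ g : V → Fin 3, StmtAux.ProperOn G g (insert a (insert b A)) →
            g a ≠ g b := by
          intro g hg hgp'
          have hgp : g₁ a = g₁ b := hsame g₁ hg₁
          exact hpat g g₁ (hAins ▸ hg) hg₁' (by tauto)
        exact StmtAux.core hgirth5 hnohole7 hab haB hbB haA hbA hBAdisj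
          (fun b' hb' a' ha' hadj => hABedge a' ha' b' hb' hadj.symm)
          g₁ f₁ hg₁ hf₁ hsame hdiff
end

section
/- Let G be a 3-connected graph in 𝒢₂ such that every 3-cutset of G is stable. If G has an induced subgraph isomorphic to the Petersen graph, then G is itself isomorphic to the Petersen graph. -/
open SimpleGraph

/-- The Petersen graph, realized as the Kneser graph of 2-element subsets of a 5-set:
two 2-subsets are adjacent iff they are disjoint. -/
def petersen : SimpleGraph {s : Finset (Fin 5) // s.card = 2} where
  Adj a b := Disjoint (a : Finset (Fin 5)) (b : Finset (Fin 5))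
  symm := ⟨fun a b h => h.symm⟩
  loopless := ⟨fun a h => by
    have h' : (a : Finset (Fin 5)) = ∅ := by simpa using disjoint_self.mp h
    have := a.property
    rw [h'] at this
    simp at this⟩

/-! ### Auxiliary material for `stmt_16` -/

abbrev Stmt16PV := {s : Finset (Fin 5) // s.card = 2}

instance : DecidableRel petersen.Adj := fun a b => by unfold petersen; infer_instance

lemma stmt16_pet_common : ∀ p q : Stmt16PV, p ≠ q →
    petersen.Adj p q ∨ ∃ w, petersen.Adj p w ∧ petersen.Adj q w := by decide

lemma stmt16_pet_unique : ∀ p q c c' : Stmt16PV, ¬ petersen.Adj p q → p ≠ q →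
    petersen.Adj p c → petersen.Adj q c → petersen.Adj p c' → petersen.Adj q c' → c = c' := by
  decide

lemma stmt16_pet_noTri : ∀ p q r : Stmt16PV,
    petersen.Adj p q → petersen.Adj q r → petersen.Adj p r → False := by decide

set_option synthInstance.maxSize 2000 in
set_option synthInstance.maxHeartbeats 1000000 in
lemma stmt16_pet3 : ∀ p q c : Stmt16PV,
    ¬ petersen.Adj p q → p ≠ q → petersen.Adj p c → petersen.Adj q c →
    ∃ u v : Stmt16PV, petersen.Adj q u ∧ petersen.Adj u v ∧ petersen.Adj v p ∧
      ¬ petersen.Adj q v ∧ ¬ petersen.Adj u p ∧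
      u ≠ c ∧ v ≠ c ∧ u ≠ p ∧ u ≠ q ∧ v ≠ p ∧ v ≠ q ∧ u ≠ v := by decide

set_option synthInstance.maxSize 2000 in
set_option synthInstance.maxHeartbeats 1000000 in
set_option maxHeartbeats 2000000 in
lemma stmt16_pet4 : ∀ p q c : Stmt16PV,
    ¬ petersen.Adj p q → p ≠ q → petersen.Adj p c → petersen.Adj q c →
    ∃ u v w : Stmt16PV, petersen.Adj q u ∧ petersen.Adj u v ∧ petersen.Adj v w ∧
      petersen.Adj w p ∧
      ¬ petersen.Adj q v ∧ ¬ petersen.Adj q w ∧ ¬ petersen.Adj u w ∧ ¬ petersen.Adj u p ∧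
      ¬ petersen.Adj v p ∧
      u ≠ c ∧ v ≠ c ∧ w ≠ c ∧ u ≠ p ∧ u ≠ q ∧ v ≠ p ∧ v ≠ q ∧ w ≠ p ∧ w ≠ q ∧
      u ≠ v ∧ u ≠ w ∧ v ≠ w := by decide

lemma stmt16_pet_trio : ∃ x y z : Stmt16PV, x ≠ y ∧ x ≠ z ∧ y ≠ z ∧
    ¬ petersen.Adj x y ∧ ¬ petersen.Adj x z ∧ ¬ petersen.Adj y z := by decide

section Girth
variable {V : Type*} {G : SimpleGraph V}

lemma stmt16_egirth_le_of_cycle {x : V} {w : G.Walk x x} (hc : w.IsCycle) :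
    G.egirth ≤ (w.length : ℕ∞) :=
  le_egirth.mp le_rfl x w hc

lemma stmt16_no_triangle (h5 : G.egirth = 5) {x y z : V}
    (hxy : G.Adj x y) (hyz : G.Adj y z) (hzx : G.Adj z x) : False := by
  have hxz : x ≠ z := fun h => G.irrefl (h ▸ hzx)
  have hxy' : x ≠ y := hxy.ne
  have hyz' : y ≠ z := hyz.ne
  let w : G.Walk x x := .cons hxy (.cons hyz (.cons hzx .nil))
  have hc : w.IsCycle := by
    rw [Walk.isCycle_def, Walk.isTrail_def]
    refine ⟨?_, by simp [w], ?_⟩ <;>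
      simp [w, Sym2.eq_iff, hxy', hyz', hxz, hxz.symm, hxy'.symm, hyz'.symm]
  have := stmt16_egirth_le_of_cycle hc
  rw [h5] at this
  have hlen : w.length = 3 := by simp [w]
  rw [hlen] at this
  exact absurd this (by decide)

lemma stmt16_no_square (h5 : G.egirth = 5) {x y z t : V}
    (hxy : G.Adj x y) (hyz : G.Adj y z) (hzt : G.Adj z t) (htx : G.Adj t x)
    (hxz : x ≠ z) (hyt : y ≠ t) : False := by
  have hxy' : x ≠ y := hxy.ne
  have hyz' : y ≠ z := hyz.ne
  have hzt' : z ≠ t := hzt.ne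
  have htx' : t ≠ x := htx.ne
  let w : G.Walk x x := .cons hxy (.cons hyz (.cons hzt (.cons htx .nil)))
  have hc : w.IsCycle := by
    rw [Walk.isCycle_def, Walk.isTrail_def]
    refine ⟨?_, by simp [w], ?_⟩ <;>
      simp [w, Sym2.eq_iff, hxy', hyz', hzt', htx', hxz, hyt, hxz.symm, hyt.symm, hxy'.symm,
        hyz'.symm, hzt'.symm, htx'.symm]
  have := stmt16_egirth_le_of_cycle hc
  rw [h5] at this
  have hlen : w.length = 4 := by simp [w]
  rw [hlen] at this
  exact absurd this (by decide)

end Girth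

section Main

variable {V : Type*} {G : SimpleGraph V}

/-- One-neighbour lemma: a vertex outside the Petersen copy has at most one neighbour inside. -/
lemma stmt16_oneNbr (f : petersen ↪g G) (h5 : G.egirth = 5) {y : V}
    (hy : y ∉ Set.range ⇑f) {p q : Stmt16PV}
    (hp : G.Adj y (f p)) (hq : G.Adj y (f q)) : p = q := by
  by_contra hne
  rcases stmt16_pet_common p q hne with hadj | ⟨t, hpt, hqt⟩
  · exact stmt16_no_triangle h5 hp (f.map_rel_iff.mpr hadj) hq.symm
  · refine stmt16_no_square h5 hp (f.map_rel_iff.mpr hpt)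
      (f.map_rel_iff.mpr hqt).symm hq.symm ?_ ?_
    · exact fun h => hy ⟨t, h.symm⟩
    · exact fun h => hne (f.injective h)

/-- The set of lengths of candidate paths: paths between distinct non-adjacent vertices of the
Petersen copy, with all interior vertices outside the copy. -/
def stmt16_vset (G : SimpleGraph V) (f : petersen ↪g G) : Set ℕ :=
  {n | ∃ (a b : Stmt16PV) (w : G.Walk (f a) (f b)),
    ¬ petersen.Adj a b ∧ a ≠ b ∧ w.IsPath ∧
    (∀ v ∈ w.support, v ≠ f a → v ≠ f b → v ∉ Set.range ⇑f) ∧ w.length = n}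

/-- A minimal candidate configuration. -/
structure Stmt16Cfg (G : SimpleGraph V) (f : petersen ↪g G) where
  a : Stmt16PV
  b : Stmt16PV
  w : G.Walk (f a) (f b)
  hnadj : ¬ petersen.Adj a b
  hne : a ≠ b
  hpath : w.IsPath
  hint : ∀ v ∈ w.support, v ≠ f a → v ≠ f b → v ∉ Set.range ⇑f
  hmin : ∀ m : ℕ, m < w.length → m ∉ stmt16_vset G f

variable {f : petersen ↪g G}

lemma stmt16_k2 (cfg : Stmt16Cfg G f) : 2 ≤ cfg.w.length := by
  by_contra hlt
  push_neg at hlt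
  have : cfg.w.length = 0 ∨ cfg.w.length = 1 := by omega
  rcases this with h | h
  · exact cfg.hne (f.injective (Walk.eq_of_length_eq_zero h))
  · exact cfg.hnadj (f.map_rel_iff.mp (Walk.adj_of_length_eq_one h))

lemma stmt16_len2 {u v : V} (w : G.Walk u v) (h : w.length = 2) :
    ∃ (y : V) (_ : G.Adj u y) (_ : G.Adj y v), w.support = [u, y, v] := by
  cases w with
  | nil => simp at h
  | cons h1 w1 =>
    cases w1 with
    | nil => simp at h
    | cons h2 w2 =>
      cases w2 with
      | nil => exact ⟨_, h1, h2, by simp⟩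
      | cons h3 w3 => simp [Walk.length_cons] at h

lemma stmt16_k3 (h5 : G.egirth = 5) (cfg : Stmt16Cfg G f) : 3 ≤ cfg.w.length := by
  by_contra hlt
  push_neg at hlt
  have h2 := stmt16_k2 cfg
  have hlen : cfg.w.length = 2 := by omega
  obtain ⟨y, h1, hh2, hsupp⟩ := stmt16_len2 cfg.w hlen
  have hnd := cfg.hpath.support_nodup
  rw [hsupp] at hnd
  have hya : y ≠ f cfg.a := by
    intro h; rw [h] at hnd; simp at hnd
  have hyb : y ≠ f cfg.b := by
    intro h; rw [h] at hnd; simp at hnd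
  have hymem : y ∈ cfg.w.support := by rw [hsupp]; simp
  have hyP : y ∉ Set.range ⇑f := cfg.hint y hymem hya hyb
  exact cfg.hne (stmt16_oneNbr f h5 hyP h1.symm hh2)

lemma stmt16_INT (h5 : G.egirth = 5) (cfg : Stmt16Cfg G f) :
    ∀ y ∈ cfg.w.support, y ∉ Set.range ⇑f → ∀ s : Stmt16PV, G.Adj y (f s) →
      s = cfg.a ∨ s = cfg.b ∨ (petersen.Adj cfg.a s ∧ petersen.Adj cfg.b s) := by
  obtain ⟨a, b, w, hnadj, hne, hpath, hint, hmin⟩ := cfg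
  dsimp only at *
  intro y hy hyP s hadj
  by_cases hsa : s = a
  · exact Or.inl hsa
  by_cases hsb : s = b
  · exact Or.inr (Or.inl hsb)
  right; right
  obtain ⟨t, d, hw⟩ := Walk.mem_support_iff_exists_append.mp hy
  have hya : y ≠ f a := fun h => hyP ⟨a, h.symm⟩
  have hyb : y ≠ f b := fun h => hyP ⟨b, h.symm⟩
  have hwp := hpath
  rw [hw] at hwp
  have htp : t.IsPath := hwp.of_append_left
  have hdp : d.IsPath := hwp.of_append_right
  have hsupp : w.support = t.support ++ d.support.tail := by rw [hw, Walk.support_append]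
  have hnd : (t.support ++ d.support.tail).Nodup := hsupp ▸ hpath.support_nodup
  have hdisj := List.disjoint_of_nodup_append hnd
  have hfb_t : f b ∉ t.support := by
    intro hmem
    have hmem' : f b ∈ d.support.tail := by
      have h' := d.end_mem_support
      rw [d.support_eq_cons] at h'
      rcases List.mem_cons.mp h' with h'' | h''
      · exact absurd h''.symm hyb
      · exact h''
    exact hdisj hmem hmem'
  have hfa_d : f a ∉ d.support.tail := fun hmem => hdisj t.start_mem_support hmem
  have hts : ∀ v ∈ t.support, v ∈ w.support := fun v hv => by
    rw [hsupp]; exact List.mem_append.mpr (Or.inl hv)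
  have hds : ∀ v ∈ d.support, v ∈ w.support := fun v hv => by
    rcases List.mem_cons.mp (d.support_eq_cons ▸ hv) with h' | h'
    · rw [h']; exact hy
    · rw [hsupp]; exact List.mem_append.mpr (Or.inr h')
  have hfs_notrange : ∀ hmem : f s ∈ w.support, False := by
    intro hmem
    exact (hint _ hmem (fun h => hsa (f.injective h)) (fun h => hsb (f.injective h))) ⟨s, rfl⟩
  have hAdjA : petersen.Adj a s := by
    by_contra hnA
    have hyfb : ¬ G.Adj y (f b) := fun h => hsb (stmt16_oneNbr f h5 hyP hadj h)
    have hd2 : 2 ≤ d.length := by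
      by_contra hlt
      push_neg at hlt
      have : d.length = 0 ∨ d.length = 1 := by omega
      rcases this with h' | h'
      · exact hyb (Walk.eq_of_length_eq_zero h')
      · exact hyfb (Walk.adj_of_length_eq_one h')
    let w' := t.concat hadj
    have hfs_t : f s ∉ t.support := fun hmem => hfs_notrange (hts _ hmem)
    have hpath' : w'.IsPath := by
      rw [Walk.isPath_def, Walk.support_concat]
      refine List.Nodup.append htp.support_nodup (by simp) ?_
      intro x hx hx'
      simp at hx'
      rw [hx'] at hx
      exact hfs_t hx
    have hint' : ∀ v ∈ w'.support, v ≠ f a → v ≠ f s → v ∉ Set.range ⇑f := by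
      intro v hv hv1 hv2
      rw [Walk.support_concat, List.mem_append] at hv
      rcases hv with hv | hv
      · have hvb : v ≠ f b := fun h => hfb_t (h ▸ hv)
        exact hint _ (hts _ hv) hv1 hvb
      · simp at hv; exact absurd hv hv2
    have hlenlt : w'.length < w.length := by
      have hlw := congrArg Walk.length hw
      rw [Walk.length_append] at hlw
      have : w'.length = t.length + 1 := Walk.length_concat _ _
      omega
    exact hmin _ hlenlt ⟨a, s, w', hnA, fun h => hsa h.symm, hpath', hint', rfl⟩
  have hAdjB : petersen.Adj b s := by
    by_contra hnB
    have hyfa : ¬ G.Adj y (f a) := fun h => hsa (stmt16_oneNbr f h5 hyP hadj h)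
    have ht2 : 2 ≤ t.length := by
      by_contra hlt
      push_neg at hlt
      have : t.length = 0 ∨ t.length = 1 := by omega
      rcases this with h' | h'
      · exact hya (Walk.eq_of_length_eq_zero h').symm
      · exact hyfa (Walk.adj_of_length_eq_one h').symm
    let w'' := Walk.cons hadj.symm d
    have hfs_d : f s ∉ d.support := fun hmem => hfs_notrange (hds _ hmem)
    have hpath'' : w''.IsPath := hdp.cons hfs_d
    have hint'' : ∀ v ∈ w''.support, v ≠ f s → v ≠ f b → v ∉ Set.range ⇑f := by
      intro v hv hv1 hv2
      rw [Walk.support_cons, List.mem_cons] at hv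
      rcases hv with rfl | hv
      · exact absurd rfl hv1
      · have hva : v ≠ f a := by
          rintro rfl
          rcases List.mem_cons.mp (d.support_eq_cons ▸ hv) with h' | h'
          · exact hya h'.symm
          · exact hfa_d h'
        exact hint _ (hds _ hv) hva hv2
    have hlenlt : w''.length < w.length := by
      have hlw := congrArg Walk.length hw
      rw [Walk.length_append] at hlw
      have : w''.length = d.length + 1 := by simp [w'', Walk.length_cons]
      omega
    exact hmin _ hlenlt ⟨s, b, w'', fun h => hnB (petersen.adj_symm h), hsb, hpath'', hint'', rfl⟩
  exact ⟨hAdjA, hAdjB⟩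

lemma stmt16_key (cfg : Stmt16Cfg G f) {y z : V}
    (t : G.Walk (f cfg.a) y) (m : G.Walk y z) (e : G.Walk z (f cfg.b))
    (hw : cfg.w = t.append (m.append e)) (hadj : G.Adj y z) : s(y, z) ∈ cfg.w.edges := by
  obtain ⟨a, b, w, hnadj, hne, hpath, hint, hmin⟩ := cfg
  dsimp only at *
  have hyz : y ≠ z := hadj.ne
  have hm1 : 1 ≤ m.length := by
    rcases Nat.eq_zero_or_pos m.length with h | h
    · exact absurd (Walk.eq_of_length_eq_zero h) hyz
    · exact h
  rcases eq_or_lt_of_le hm1 with hm | hm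
  · -- m has length one: its unique edge is s(y,z)
    have hmem : s(y, z) ∈ m.edges := by
      cases m with
      | nil => simp at hm
      | cons h1 m' =>
        have h0 : m'.length = 0 := by
          rw [Walk.length_cons] at hm
          omega
        have hx := Walk.eq_of_length_eq_zero h0
        subst hx
        simp
    rw [hw, Walk.edges_append, Walk.edges_append]
    exact List.mem_append.mpr (Or.inr (List.mem_append.mpr (Or.inl hmem)))
  · exfalso
    let w2 := t.append (Walk.cons hadj e)
    have hwp := hpath
    rw [hw] at hwp
    have htp : t.IsPath := hwp.of_append_left
    have hmep : (m.append e).IsPath := hwp.of_append_right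
    have hep : e.IsPath := hmep.of_append_right
    have hnd : (t.support ++ (m.append e).support.tail).Nodup := by
      rw [← Walk.support_append]; exact hwp.support_nodup
    have htail : (m.append e).support.tail = m.support.tail ++ e.support.tail := by
      rw [Walk.support_append, m.support_eq_cons]
      rfl
    rw [htail] at hnd
    have hdisj := List.disjoint_of_nodup_append hnd
    have hzm : z ∈ m.support.tail := by
      have h' := m.end_mem_support
      rw [m.support_eq_cons] at h'
      rcases List.mem_cons.mp h' with h'' | h''
      · exact absurd h''.symm hyz
      · exact h''
    have hzt : z ∉ t.support := fun h => hdisj h (List.mem_append.mpr (Or.inl hzm))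
    have hpath2 : w2.IsPath := by
      rw [Walk.isPath_def, Walk.support_append, Walk.support_cons, List.tail_cons]
      refine List.Nodup.append htp.support_nodup hep.support_nodup ?_
      intro v hv hv'
      rcases List.mem_cons.mp (e.support_eq_cons ▸ hv') with rfl | hv''
      · exact hzt hv
      · exact hdisj hv (List.mem_append.mpr (Or.inr hv''))
    have hint2 : ∀ v ∈ w2.support, v ≠ f a → v ≠ f b → v ∉ Set.range ⇑f := by
      intro v hv
      apply hint
      rw [Walk.mem_support_append_iff] at hv
      rw [hw, Walk.mem_support_append_iff]
      rcases hv with hv | hv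
      · exact Or.inl hv
      · rw [Walk.support_cons, List.mem_cons] at hv
        rcases hv with rfl | hv
        · exact Or.inr (by rw [Walk.mem_support_append_iff]; exact Or.inl m.start_mem_support)
        · exact Or.inr (by rw [Walk.mem_support_append_iff]; exact Or.inr hv)
    have hlen2 : w2.length < w.length := by
      have hlw := congrArg Walk.length hw
      rw [Walk.length_append, Walk.length_append] at hlw
      have : w2.length = t.length + (e.length + 1) := by
        simp [w2, Walk.length_append, Walk.length_cons]
      omega
    exact hmin _ hlen2 ⟨a, b, w2, hnadj, hne, hpath2, hint2, rfl⟩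

lemma stmt16_chord (cfg : Stmt16Cfg G f) {y z : V} (hy : y ∈ cfg.w.support)
    (hz : z ∈ cfg.w.support) (hadj : G.Adj y z) : s(y, z) ∈ cfg.w.edges := by
  obtain ⟨t, d, hw⟩ := Walk.mem_support_iff_exists_append.mp hy
  have hz' := hz
  rw [hw, Walk.mem_support_append_iff] at hz'
  rcases hz' with hzt | hzd
  · obtain ⟨t1, m, ht⟩ := Walk.mem_support_iff_exists_append.mp hzt
    have hw' : cfg.w = t1.append (m.append d) := by rw [hw, ht, Walk.append_assoc]
    have := stmt16_key cfg t1 m d hw' hadj.symm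
    rwa [Sym2.eq_swap] at this
  · obtain ⟨m, e, hd⟩ := Walk.mem_support_iff_exists_append.mp hzd
    exact stmt16_key cfg t m e (by rw [hw, hd]) hadj

lemma stmt16_hole3 (h5 : G.egirth = 5) (cfg : Stmt16Cfg G f) {c u v : Stmt16PV}
    (hac : petersen.Adj cfg.a c) (hbc : petersen.Adj cfg.b c)
    (h1 : petersen.Adj cfg.b u) (h2 : petersen.Adj u v) (h3 : petersen.Adj v cfg.a)
    (n1 : ¬ petersen.Adj cfg.b v) (n2 : ¬ petersen.Adj u cfg.a)
    (nc1 : u ≠ c) (nc2 : v ≠ c) (d1 : u ≠ cfg.a) (d2 : u ≠ cfg.b) (d3 : v ≠ cfg.a)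
    (d4 : v ≠ cfg.b) (d5 : u ≠ v) : G.HasHole (cfg.w.length + 3) := by
  have hINT := stmt16_INT h5 cfg
  have hchord := @stmt16_chord V G f cfg
  have hk3 := stmt16_k3 h5 cfg
  have e1 : G.Adj (f cfg.b) (f u) := f.map_rel_iff.mpr h1
  have e2 : G.Adj (f u) (f v) := f.map_rel_iff.mpr h2
  have e3 : G.Adj (f v) (f cfg.a) := f.map_rel_iff.mpr h3
  let q : G.Walk (f cfg.b) (f cfg.a) := .cons e1 (.cons e2 (.cons e3 .nil))
  let W : G.Walk (f cfg.a) (f cfg.a) := cfg.w.append q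
  have hfu_ns : f u ∉ cfg.w.support := fun hmem =>
    (cfg.hint _ hmem (fun h => d1 (f.injective h)) (fun h => d2 (f.injective h))) ⟨u, rfl⟩
  have hfv_ns : f v ∉ cfg.w.support := fun hmem =>
    (cfg.hint _ hmem (fun h => d3 (f.injective h)) (fun h => d4 (f.injective h))) ⟨v, rfl⟩
  have hfa_tail : f cfg.a ∉ cfg.w.support.tail := by
    have hh := cfg.hpath.support_nodup
    rw [cfg.w.support_eq_cons] at hh
    exact (List.nodup_cons.mp hh).1
  have iuv : f u ≠ f v := fun h => d5 (f.injective h)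
  have iua : f u ≠ f cfg.a := fun h => d1 (f.injective h)
  have iub : f u ≠ f cfg.b := fun h => d2 (f.injective h)
  have iva : f v ≠ f cfg.a := fun h => d3 (f.injective h)
  have ivb : f v ≠ f cfg.b := fun h => d4 (f.injective h)
  have iab : f cfg.a ≠ f cfg.b := fun h => cfg.hne (f.injective h)
  have hsupp : W.support = cfg.w.support ++ [f u, f v, f cfg.a] := by
    simp [W, q, Walk.support_append]
  have hedges : W.edges =
      cfg.w.edges ++ [s(f cfg.b, f u), s(f u, f v), s(f v, f cfg.a)] := by
    simp [W, q, Walk.edges_append]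
  have hWlen : W.length = cfg.w.length + 3 := by
    simp [W, q, Walk.length_append]
  have hcyc : W.IsCycle := by
    rw [Walk.isCycle_def, Walk.isTrail_def]
    refine ⟨?_, ?_, ?_⟩
    · rw [hedges]
      refine List.Nodup.append cfg.hpath.isTrail.edges_nodup ?_ ?_
      · have s1 : cfg.b ≠ u := Ne.symm d2
        have s2 : cfg.b ≠ v := Ne.symm d4
        have s3 : cfg.a ≠ u := Ne.symm d1
        have s4 : cfg.a ≠ v := Ne.symm d3
        have s5 : cfg.b ≠ cfg.a := Ne.symm cfg.hne
        have s6 : v ≠ u := Ne.symm d5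
        simp [Sym2.eq_iff]
        tauto
      · intro edg he he'
        simp at he'
        rcases he' with rfl | rfl | rfl
        · exact hfu_ns (Walk.snd_mem_support_of_mem_edges _ he)
        · exact hfu_ns (Walk.fst_mem_support_of_mem_edges _ he)
        · exact hfv_ns (Walk.fst_mem_support_of_mem_edges _ he)
    · intro h
      have := congrArg Walk.length h
      rw [hWlen] at this
      simp at this
    · have htl : W.support.tail = cfg.w.support.tail ++ [f u, f v, f cfg.a] := by
        rw [hsupp, cfg.w.support_eq_cons]
        rfl
      rw [htl]
      refine List.Nodup.append ?_ (by simp [iuv, iua, iva]) ?_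
      · have hh := cfg.hpath.support_nodup
        rw [cfg.w.support_eq_cons] at hh
        exact (List.nodup_cons.mp hh).2
      · intro x hx hx'
        have hxw : x ∈ cfg.w.support := List.mem_of_mem_tail hx
        simp at hx'
        rcases hx' with rfl | rfl | rfl
        · exact hfu_ns hxw
        · exact hfv_ns hxw
        · exact hfa_tail hx
  have toA : ∀ {x y' : V}, s(x, y') ∈ W.edges → W.toSubgraph.Adj x y' := fun h =>
    Subgraph.mem_edgeSet.mp ((Walk.mem_edges_toSubgraph W).mpr h)
  have edgeW : ∀ {x y' : V}, s(x, y') ∈ cfg.w.edges → s(x, y') ∈ W.edges := by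
    intro x y' h; rw [hedges]; exact List.mem_append.mpr (Or.inl h)
  have edge1 : s(f cfg.b, f u) ∈ W.edges := by rw [hedges]; simp
  have edge2 : s(f u, f v) ∈ W.edges := by rw [hedges]; simp
  have edge3 : s(f v, f cfg.a) ∈ W.edges := by rw [hedges]; simp
  have interiorP : ∀ x ∈ cfg.w.support, x ≠ f cfg.a → x ≠ f cfg.b →
      ∀ s : Stmt16PV, G.Adj x (f s) → s = cfg.a ∨ s = cfg.b ∨ s = c := by
    intro x hxw hxa hxb s hxs
    rcases hINT x hxw (cfg.hint _ hxw hxa hxb) s hxs with h' | h' | ⟨hA, hB⟩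
    · exact Or.inl h'
    · exact Or.inr (Or.inl h')
    · exact Or.inr (Or.inr (stmt16_pet_unique cfg.a cfg.b s c cfg.hnadj cfg.hne hA hB hac hbc))
  have mainU : ∀ x ∈ cfg.w.support, G.Adj x (f u) → W.toSubgraph.Adj x (f u) := by
    intro x hxw hxu
    by_cases hxa : x = f cfg.a
    · exact absurd (petersen.adj_symm (f.map_rel_iff.mp (hxa ▸ hxu))) n2
    by_cases hxb : x = f cfg.b
    · exact toA (hxb ▸ edge1)
    rcases interiorP x hxw hxa hxb u hxu with rfl | rfl | rfl
    · exact absurd rfl d1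
    · exact absurd rfl d2
    · exact absurd rfl nc1
  have mainV : ∀ x ∈ cfg.w.support, G.Adj x (f v) → W.toSubgraph.Adj x (f v) := by
    intro x hxw hxv
    by_cases hxa : x = f cfg.a
    · exact hxa ▸ (toA edge3).symm
    by_cases hxb : x = f cfg.b
    · exact absurd (f.map_rel_iff.mp (hxb ▸ hxv)) n1
    rcases interiorP x hxw hxa hxb v hxv with rfl | rfl | rfl
    · exact absurd rfl d3
    · exact absurd rfl d4
    · exact absurd rfl nc2
  have hindsub : W.toSubgraph.IsInduced := by
    intro x hx y' hy' hadj
    rw [Walk.mem_verts_toSubgraph, hsupp, List.mem_append] at hx hy'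
    have cl : ∀ {x₀ : V}, x₀ ∈ cfg.w.support ∨ x₀ ∈ [f u, f v, f cfg.a] →
        x₀ ∈ cfg.w.support ∨ x₀ = f u ∨ x₀ = f v := by
      rintro x₀ (h | h)
      · exact Or.inl h
      · simp at h
        rcases h with rfl | rfl | rfl
        · exact Or.inr (Or.inl rfl)
        · exact Or.inr (Or.inr rfl)
        · exact Or.inl cfg.w.start_mem_support
    rcases cl hx with hx1 | hx1 | hx1 <;> rcases cl hy' with hy1 | hy1 | hy1
    · exact toA (edgeW (hchord hx1 hy1 hadj))
    · exact hy1 ▸ mainU x hx1 (hy1 ▸ hadj)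
    · exact hy1 ▸ mainV x hx1 (hy1 ▸ hadj)
    · exact hx1 ▸ (mainU y' hy1 (hx1 ▸ hadj.symm)).symm
    · exact absurd (hx1 ▸ hy1 ▸ hadj) G.irrefl
    · exact hx1 ▸ hy1 ▸ toA edge2
    · exact hx1 ▸ (mainV y' hy1 (hx1 ▸ hadj.symm)).symm
    · exact hx1 ▸ hy1 ▸ (toA edge2).symm
    · exact absurd (hx1 ▸ hy1 ▸ hadj) G.irrefl
  exact ⟨by omega, f cfg.a, W, hcyc, hindsub, hWlen⟩

lemma stmt16_hole4 (h5 : G.egirth = 5) (cfg : Stmt16Cfg G f) {c u v t : Stmt16PV}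
    (hac : petersen.Adj cfg.a c) (hbc : petersen.Adj cfg.b c)
    (h1 : petersen.Adj cfg.b u) (h2 : petersen.Adj u v) (h3 : petersen.Adj v t)
    (h4 : petersen.Adj t cfg.a)
    (n1 : ¬ petersen.Adj cfg.b v) (n2 : ¬ petersen.Adj cfg.b t) (n3 : ¬ petersen.Adj u t)
    (n4 : ¬ petersen.Adj u cfg.a) (n5 : ¬ petersen.Adj v cfg.a)
    (nc1 : u ≠ c) (nc2 : v ≠ c) (nc3 : t ≠ c)
    (d1 : u ≠ cfg.a) (d2 : u ≠ cfg.b) (d3 : v ≠ cfg.a) (d4 : v ≠ cfg.b)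
    (d5 : t ≠ cfg.a) (d6 : t ≠ cfg.b) (d7 : u ≠ v) (d8 : u ≠ t) (d9 : v ≠ t) :
    G.HasHole (cfg.w.length + 4) := by
  have hINT := stmt16_INT h5 cfg
  have hchord := @stmt16_chord V G f cfg
  have hk3 := stmt16_k3 h5 cfg
  have e1 : G.Adj (f cfg.b) (f u) := f.map_rel_iff.mpr h1
  have e2 : G.Adj (f u) (f v) := f.map_rel_iff.mpr h2
  have e3 : G.Adj (f v) (f t) := f.map_rel_iff.mpr h3
  have e4 : G.Adj (f t) (f cfg.a) := f.map_rel_iff.mpr h4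
  let q : G.Walk (f cfg.b) (f cfg.a) := .cons e1 (.cons e2 (.cons e3 (.cons e4 .nil)))
  let W : G.Walk (f cfg.a) (f cfg.a) := cfg.w.append q
  have hfu_ns : f u ∉ cfg.w.support := fun hmem =>
    (cfg.hint _ hmem (fun h => d1 (f.injective h)) (fun h => d2 (f.injective h))) ⟨u, rfl⟩
  have hfv_ns : f v ∉ cfg.w.support := fun hmem =>
    (cfg.hint _ hmem (fun h => d3 (f.injective h)) (fun h => d4 (f.injective h))) ⟨v, rfl⟩
  have hft_ns : f t ∉ cfg.w.support := fun hmem =>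
    (cfg.hint _ hmem (fun h => d5 (f.injective h)) (fun h => d6 (f.injective h))) ⟨t, rfl⟩
  have hfa_tail : f cfg.a ∉ cfg.w.support.tail := by
    have hh := cfg.hpath.support_nodup
    rw [cfg.w.support_eq_cons] at hh
    exact (List.nodup_cons.mp hh).1
  have iuv : f u ≠ f v := fun h => d7 (f.injective h)
  have iut : f u ≠ f t := fun h => d8 (f.injective h)
  have ivt : f v ≠ f t := fun h => d9 (f.injective h)
  have iua : f u ≠ f cfg.a := fun h => d1 (f.injective h)
  have iub : f u ≠ f cfg.b := fun h => d2 (f.injective h)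
  have iva : f v ≠ f cfg.a := fun h => d3 (f.injective h)
  have ivb : f v ≠ f cfg.b := fun h => d4 (f.injective h)
  have ita : f t ≠ f cfg.a := fun h => d5 (f.injective h)
  have itb : f t ≠ f cfg.b := fun h => d6 (f.injective h)
  have iab : f cfg.a ≠ f cfg.b := fun h => cfg.hne (f.injective h)
  have hsupp : W.support = cfg.w.support ++ [f u, f v, f t, f cfg.a] := by
    simp [W, q, Walk.support_append]
  have hedges : W.edges =
      cfg.w.edges ++ [s(f cfg.b, f u), s(f u, f v), s(f v, f t), s(f t, f cfg.a)] := by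
    simp [W, q, Walk.edges_append]
  have hWlen : W.length = cfg.w.length + 4 := by
    simp [W, q, Walk.length_append]
  have hcyc : W.IsCycle := by
    rw [Walk.isCycle_def, Walk.isTrail_def]
    refine ⟨?_, ?_, ?_⟩
    · rw [hedges]
      refine List.Nodup.append cfg.hpath.isTrail.edges_nodup ?_ ?_
      · have s1 : cfg.b ≠ u := Ne.symm d2
        have s2 : cfg.b ≠ v := Ne.symm d4
        have s3 : cfg.b ≠ t := Ne.symm d6
        have s4 : cfg.a ≠ u := Ne.symm d1
        have s5 : cfg.a ≠ v := Ne.symm d3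
        have s6 : cfg.a ≠ t := Ne.symm d5
        have s7 : cfg.b ≠ cfg.a := Ne.symm cfg.hne
        have s8 : v ≠ u := Ne.symm d7
        have s9 : t ≠ u := Ne.symm d8
        have s10 : t ≠ v := Ne.symm d9
        simp [Sym2.eq_iff]
        tauto
      · intro edg he he'
        simp at he'
        rcases he' with rfl | rfl | rfl | rfl
        · exact hfu_ns (Walk.snd_mem_support_of_mem_edges _ he)
        · exact hfu_ns (Walk.fst_mem_support_of_mem_edges _ he)
        · exact hfv_ns (Walk.fst_mem_support_of_mem_edges _ he)
        · exact hft_ns (Walk.fst_mem_support_of_mem_edges _ he)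
    · intro h
      have := congrArg Walk.length h
      rw [hWlen] at this
      simp at this
    · have htl : W.support.tail = cfg.w.support.tail ++ [f u, f v, f t, f cfg.a] := by
        rw [hsupp, cfg.w.support_eq_cons]
        rfl
      rw [htl]
      refine List.Nodup.append ?_ (by simp [iuv, iut, ivt, iua, iva, ita]) ?_
      · have hh := cfg.hpath.support_nodup
        rw [cfg.w.support_eq_cons] at hh
        exact (List.nodup_cons.mp hh).2
      · intro x hx hx'
        have hxw : x ∈ cfg.w.support := List.mem_of_mem_tail hx
        simp at hx'
        rcases hx' with rfl | rfl | rfl | rfl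
        · exact hfu_ns hxw
        · exact hfv_ns hxw
        · exact hft_ns hxw
        · exact hfa_tail hx
  have toA : ∀ {x y' : V}, s(x, y') ∈ W.edges → W.toSubgraph.Adj x y' := fun h =>
    Subgraph.mem_edgeSet.mp ((Walk.mem_edges_toSubgraph W).mpr h)
  have edgeW : ∀ {x y' : V}, s(x, y') ∈ cfg.w.edges → s(x, y') ∈ W.edges := by
    intro x y' h; rw [hedges]; exact List.mem_append.mpr (Or.inl h)
  have edge1 : s(f cfg.b, f u) ∈ W.edges := by rw [hedges]; simp
  have edge2 : s(f u, f v) ∈ W.edges := by rw [hedges]; simp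
  have edge3 : s(f v, f t) ∈ W.edges := by rw [hedges]; simp
  have edge4 : s(f t, f cfg.a) ∈ W.edges := by rw [hedges]; simp
  have interiorP : ∀ x ∈ cfg.w.support, x ≠ f cfg.a → x ≠ f cfg.b →
      ∀ s : Stmt16PV, G.Adj x (f s) → s = cfg.a ∨ s = cfg.b ∨ s = c := by
    intro x hxw hxa hxb s hxs
    rcases hINT x hxw (cfg.hint _ hxw hxa hxb) s hxs with h' | h' | ⟨hA, hB⟩
    · exact Or.inl h'
    · exact Or.inr (Or.inl h')
    · exact Or.inr (Or.inr (stmt16_pet_unique cfg.a cfg.b s c cfg.hnadj cfg.hne hA hB hac hbc))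
  have mainU : ∀ x ∈ cfg.w.support, G.Adj x (f u) → W.toSubgraph.Adj x (f u) := by
    intro x hxw hxu
    by_cases hxa : x = f cfg.a
    · exact absurd (petersen.adj_symm (f.map_rel_iff.mp (hxa ▸ hxu))) n4
    by_cases hxb : x = f cfg.b
    · exact toA (hxb ▸ edge1)
    rcases interiorP x hxw hxa hxb u hxu with rfl | rfl | rfl
    · exact absurd rfl d1
    · exact absurd rfl d2
    · exact absurd rfl nc1
  have mainV : ∀ x ∈ cfg.w.support, G.Adj x (f v) → W.toSubgraph.Adj x (f v) := by
    intro x hxw hxv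
    by_cases hxa : x = f cfg.a
    · exact absurd (petersen.adj_symm (f.map_rel_iff.mp (hxa ▸ hxv))) n5
    by_cases hxb : x = f cfg.b
    · exact absurd (f.map_rel_iff.mp (hxb ▸ hxv)) n1
    rcases interiorP x hxw hxa hxb v hxv with rfl | rfl | rfl
    · exact absurd rfl d3
    · exact absurd rfl d4
    · exact absurd rfl nc2
  have mainT : ∀ x ∈ cfg.w.support, G.Adj x (f t) → W.toSubgraph.Adj x (f t) := by
    intro x hxw hxt
    by_cases hxa : x = f cfg.a
    · exact hxa ▸ (toA edge4).symm
    by_cases hxb : x = f cfg.b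
    · exact absurd (f.map_rel_iff.mp (hxb ▸ hxt)) n2
    rcases interiorP x hxw hxa hxb t hxt with rfl | rfl | rfl
    · exact absurd rfl d5
    · exact absurd rfl d6
    · exact absurd rfl nc3
  have hindsub : W.toSubgraph.IsInduced := by
    intro x hx y' hy' hadj
    rw [Walk.mem_verts_toSubgraph, hsupp, List.mem_append] at hx hy'
    have cl : ∀ {x₀ : V}, x₀ ∈ cfg.w.support ∨ x₀ ∈ [f u, f v, f t, f cfg.a] →
        x₀ ∈ cfg.w.support ∨ x₀ = f u ∨ x₀ = f v ∨ x₀ = f t := by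
      rintro x₀ (h | h)
      · exact Or.inl h
      · simp at h
        rcases h with rfl | rfl | rfl | rfl
        · exact Or.inr (Or.inl rfl)
        · exact Or.inr (Or.inr (Or.inl rfl))
        · exact Or.inr (Or.inr (Or.inr rfl))
        · exact Or.inl cfg.w.start_mem_support
    rcases cl hx with hx1 | hx1 | hx1 | hx1 <;> rcases cl hy' with hy1 | hy1 | hy1 | hy1
    · exact toA (edgeW (hchord hx1 hy1 hadj))
    · exact hy1 ▸ mainU x hx1 (hy1 ▸ hadj)
    · exact hy1 ▸ mainV x hx1 (hy1 ▸ hadj)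
    · exact hy1 ▸ mainT x hx1 (hy1 ▸ hadj)
    · exact hx1 ▸ (mainU y' hy1 (hx1 ▸ hadj.symm)).symm
    · exact absurd (hx1 ▸ hy1 ▸ hadj) G.irrefl
    · exact hx1 ▸ hy1 ▸ toA edge2
    · exact absurd (f.map_rel_iff.mp (hx1 ▸ hy1 ▸ hadj)) n3
    · exact hx1 ▸ (mainV y' hy1 (hx1 ▸ hadj.symm)).symm
    · exact hx1 ▸ hy1 ▸ (toA edge2).symm
    · exact absurd (hx1 ▸ hy1 ▸ hadj) G.irrefl
    · exact hx1 ▸ hy1 ▸ toA edge3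
    · exact hx1 ▸ (mainT y' hy1 (hx1 ▸ hadj.symm)).symm
    · exact absurd (f.map_rel_iff.mp (hx1 ▸ hy1 ▸ hadj)) (fun h => n3 (petersen.adj_symm h))
    · exact hx1 ▸ hy1 ▸ (toA edge3).symm
    · exact absurd (hx1 ▸ hy1 ▸ hadj) G.irrefl
  exact ⟨by omega, f cfg.a, W, hcyc, hindsub, hWlen⟩

lemma stmt16_exists_init [Fintype V] (f : petersen ↪g G) (h5 : G.egirth = 5)
    (h3c : G.ThreeConnected) (x : V) (hx : x ∉ Set.range ⇑f) :
    (stmt16_vset G f).Nonempty := by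
  classical
  set P : Set V := Set.range ⇑f with hP
  have hx' : x ∈ (Pᶜ : Set V) := hx
  set Γ : SimpleGraph (Pᶜ : Set V) := G.induce (Pᶜ : Set V) with hΓ
  set C : Set V := {y | ∃ h : y ∈ (Pᶜ : Set V), Γ.Reachable ⟨x, hx'⟩ ⟨y, h⟩} with hC
  set A : Set Stmt16PV := {p | ∃ y ∈ C, G.Adj y (f p)} with hA
  have hCP : ∀ y ∈ C, y ∉ P := fun y hy => hy.1
  have hxC : x ∈ C := ⟨hx', Reachable.refl _⟩
  have pair : ∃ a b : Stmt16PV, a ∈ A ∧ b ∈ A ∧ a ≠ b ∧ ¬ petersen.Adj a b := by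
    by_contra hno
    push_neg at hno
    set X : Set V := ⇑f '' A with hX
    have hXP : X ⊆ P := by rintro _ ⟨p, hp, rfl⟩; exact ⟨p, rfl⟩
    have hcard : X.ncard ≤ 2 := by
      by_contra hgt
      push_neg at hgt
      obtain ⟨x1, hx1, x2, hx2, x3, hx3, h12, h13, h23⟩ := (Set.two_lt_ncard X.toFinite).mp hgt
      obtain ⟨p1, hp1, rfl⟩ := hx1
      obtain ⟨p2, hp2, rfl⟩ := hx2
      obtain ⟨p3, hp3, rfl⟩ := hx3
      have h12' : p1 ≠ p2 := fun h => h12 (by rw [h])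
      have h13' : p1 ≠ p3 := fun h => h13 (by rw [h])
      have h23' : p2 ≠ p3 := fun h => h23 (by rw [h])
      exact stmt16_pet_noTri p1 p2 p3 (hno p1 p2 hp1 hp2 h12') (hno p2 p3 hp2 hp3 h23')
        (hno p1 p3 hp1 hp3 h13')
    have hconn := h3c.2 X hcard
    obtain ⟨t1, t2, t3, ht12, ht13, ht23, hn12, hn13, hn23⟩ := stmt16_pet_trio
    have hsome : ∃ tt : Stmt16PV, tt ∉ A := by
      by_cases hm1 : t1 ∈ A
      · by_cases hm2 : t2 ∈ A
        · exact absurd (hno t1 t2 hm1 hm2 ht12) hn12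
        · exact ⟨t2, hm2⟩
      · exact ⟨t1, hm1⟩
    obtain ⟨tt, htt⟩ := hsome
    have hft : f tt ∈ (Xᶜ : Set V) := by
      intro hmem
      obtain ⟨p, hp, hfp⟩ := hmem
      exact htt (f.injective hfp ▸ hp)
    have hxX : x ∈ (Xᶜ : Set V) := fun hmem => hx (hXP hmem)
    obtain ⟨pwalk⟩ := hconn.preconnected ⟨x, hxX⟩ ⟨f tt, hft⟩
    have confined : ∀ (u v : (Xᶜ : Set V)) (p : (G.induce (Xᶜ : Set V)).Walk u v),
        (u : V) ∈ C → (v : V) ∈ C := by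
      intro u v p
      induction p with
      | nil => exact id
      | @cons u₀ u₂ v₀ hadj p ih =>
        intro hu
        apply ih
        by_cases hmem : (↑u₂ : V) ∈ P
        · exfalso
          obtain ⟨p', hp'⟩ := hmem
          have hpA : p' ∈ A := ⟨↑u₀, hu, by rw [hp']; exact hadj⟩
          exact u₂.2 ⟨p', hpA, hp'⟩
        · obtain ⟨hu', hr⟩ := hu
          exact ⟨hmem, hr.trans (Adj.reachable (by exact hadj :
            Γ.Adj ⟨↑u₀, hu'⟩ ⟨↑u₂, hmem⟩))⟩
    have hfinal : (f tt : V) ∈ C := confined _ _ pwalk hxC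
    exact (hCP _ hfinal) ⟨tt, rfl⟩
  obtain ⟨a, b, haA, hbA, hne, hnadj⟩ := pair
  obtain ⟨ya, hyaC, hya⟩ := haA
  obtain ⟨yb, hybC, hyb⟩ := hbA
  obtain ⟨ha1, hra⟩ := hyaC
  obtain ⟨hb1, hrb⟩ := hybC
  obtain ⟨γ⟩ := hra.symm.trans hrb
  let hom : Γ →g G := ⟨fun z => (z : V), fun {c d} h => h⟩
  let g0 : G.Walk ya yb := γ.map hom
  let W1 : G.Walk (f a) (f b) := Walk.cons hya.symm (g0.concat hyb)
  refine ⟨W1.bypass.length, a, b, W1.bypass, hnadj, hne, W1.bypass_isPath, ?_, rfl⟩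
  intro v hv hv1 hv2
  have hv' := W1.support_bypass_subset hv
  rw [Walk.support_cons, List.mem_cons] at hv'
  rcases hv' with rfl | hv'
  · exact absurd rfl hv1
  rw [Walk.support_concat, List.mem_append] at hv'
  rcases hv' with hv' | hv'
  · rw [Walk.support_map] at hv'
    obtain ⟨z, hz, rfl⟩ := List.mem_map.mp hv'
    exact z.2
  · simp at hv'
    exact absurd hv' hv2

end Main

/-- a 3-connected graph `G ∈ 𝒢₂` whose 3-cutsets are all stable and which
has an induced subgraph isomorphic to the Petersen graph is itself isomorphic to the
Petersen graph. -/
theorem stmt_16 {V : Type*} [Fintype V] (G : SimpleGraph V) (hG : G.MemGFamily 2)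
    (h3c : G.ThreeConnected)
    (hstable : ∀ X : Set V, X.ncard = 3 → G.IsCutset X → ∀ a ∈ X, ∀ b ∈ X, ¬ G.Adj a b)
    (hpet : Nonempty (petersen ↪g G)) :
    Nonempty (G ≃g petersen) := by
  obtain ⟨f⟩ := hpet
  have h5 : G.egirth = 5 := by
    have h := hG.1
    norm_num at h
    exact h
  by_cases hsurj : Function.Surjective ⇑f
  · exact ⟨RelIso.symm ⟨Equiv.ofBijective ⇑f ⟨f.injective, hsurj⟩, f.map_rel_iff⟩⟩
  · exfalso
    have hex : ∃ x : V, x ∉ Set.range ⇑f := by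
      by_contra h
      push_neg at h
      exact hsurj fun y => h y
    obtain ⟨x, hx⟩ := hex
    have hmemk := Nat.sInf_mem (stmt16_exists_init f h5 h3c x hx)
    obtain ⟨a, b, w, hnadj, hne, hpath, hint, hlen⟩ := hmemk
    have hmin : ∀ m : ℕ, m < w.length → m ∉ stmt16_vset G f := fun m hm =>
      Nat.notMem_of_lt_sInf (hlen ▸ hm)
    let cfg : Stmt16Cfg G f := ⟨a, b, w, hnadj, hne, hpath, hint, hmin⟩
    obtain hpq | ⟨c, hac, hbc⟩ := stmt16_pet_common a b hne
    · exact hnadj hpq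
    obtain ⟨u3, v3, p31, p32, p33, p3n1, p3n2, p3c1, p3c2, p3d1, p3d2, p3d3, p3d4, p3d5⟩ :=
      stmt16_pet3 a b c hnadj hne hac hbc
    obtain ⟨u4, v4, t4, q41, q42, q43, q44, q4n1, q4n2, q4n3, q4n4, q4n5,
      q4c1, q4c2, q4c3, q4d1, q4d2, q4d3, q4d4, q4d5, q4d6, q4d7, q4d8, q4d9⟩ :=
      stmt16_pet4 a b c hnadj hne hac hbc
    have hole3 := stmt16_hole3 h5 cfg hac hbc p31 p32 p33 p3n1 p3n2 p3c1 p3c2 p3d1 p3d2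
      p3d3 p3d4 p3d5
    have hole4 := stmt16_hole4 h5 cfg hac hbc q41 q42 q43 q44 q4n1 q4n2 q4n3 q4n4 q4n5
      q4c1 q4c2 q4c3 q4d1 q4d2 q4d3 q4d4 q4d5 q4d6 q4d7 q4d8 q4d9
    have hk3 : 3 ≤ w.length := stmt16_k3 h5 cfg
    rcases Nat.even_or_odd w.length with hev | hod
    · obtain ⟨mm, hmm⟩ := hev
      have hodd : Odd (w.length + 3) := ⟨mm + 1, by omega⟩
      exact hG.2 (w.length + 3) hodd (by omega) hole3
    · obtain ⟨mm, hmm⟩ := hod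
      have hodd : Odd (w.length + 4) := ⟨mm + 2, by omega⟩
      exact hG.2 (w.length + 4) hodd (by omega) hole4
end
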